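/- arXiv:1704.03715 — 2 statements merged into one kernel-verified Lean document; each statement's English description precedes it below -/
import Mathlib

section
/- Let N be a finite modular lattice, let θ_1,…,θ_s be its maximal congruences and let N_i := N/θ_i be its subdirectly irreducible factors. If every N_i is tightly partition embeddable, then N is tightly partition embeddable; more precisely, if for each i there is a tight embedding f_i : N_i → Part(n_i), then there is a tight embedding of N into Part(n_1 + ⋯ + n_s). -/
open scoped Classical
noncomputable section

/-! ### Lattice-theoretic preliminaries -/

/-- A tight embedding between bounded lattices: a cover-preserving lattice
homomorphism sending bottom to bottom. -/
def IsTightEmbedding {L L' : Type*} [Lattice L] [BoundedOrder L] [Lattice L'] [BoundedOrder L']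
    (f : L → L') : Prop :=
  (∀ a b : L, f (a ⊔ b) = f a ⊔ f b) ∧ (∀ a b : L, f (a ⊓ b) = f a ⊓ f b) ∧
    f ⊥ = ⊥ ∧ ∀ a b : L, a ⋖ b → f a ⋖ f b

/-- `Part(n)` is formalized as `Setoid (Fin n)`, the lattice of partitions of an
`n`-element set ordered by refinement. -/
def TightlyPartitionEmbeddable (L : Type*) [Lattice L] [BoundedOrder L] : Prop :=
  ∃ (n : ℕ) (f : L → Setoid (Fin n)), IsTightEmbedding f

/-- 2-distributivity. -/
def TwoDistrib (L : Type*) [Lattice L] : Prop :=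
  ∀ a b c d : L, a ⊓ (b ⊔ c ⊔ d) = (a ⊓ (b ⊔ c)) ⊔ (a ⊓ (b ⊔ d)) ⊔ (a ⊓ (c ⊔ d))

/-- `L` has a cover-preserving sublattice isomorphic to `M₄`: six elements
`b, t, a₁,…,a₄` with `b ⋖ aᵢ ⋖ t` (covers in `L`), `aᵢ ⊓ aⱼ = b`, `aᵢ ⊔ aⱼ = t`. -/
def HasCoverPreservingM4 (L : Type*) [Lattice L] : Prop :=
  ∃ (b t : L) (a : Fin 4 → L), Function.Injective a ∧
    (∀ i, b ⋖ a i) ∧ (∀ i, a i ⋖ t) ∧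
    (∀ i j, i ≠ j → a i ⊓ a j = b) ∧ ∀ i j, i ≠ j → a i ⊔ a j = t

/-- Thin: 2-distributive and without cover-preserving `M₄`. -/
def IsThin (L : Type*) [Lattice L] : Prop := TwoDistrib L ∧ ¬ HasCoverPreservingM4 L

/-- Height `d(L)` of a finite lattice: one less than the largest cardinality of a chain. -/
def latHeight (L : Type*) [Lattice L] [Fintype L] : ℕ :=
  (((Finset.univ : Finset (Finset L)).filter fun c : Finset L => IsChain (· ≤ ·) (c : Set L)).sup
    Finset.card) - 1

/-- The set `J(L)` of (nonzero) join-irreducible elements of a finite lattice. -/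
def JFinset (L : Type*) [Lattice L] [Fintype L] : Finset L :=
  Finset.univ.filter fun p => SupIrred p

/-- `J(a) = {p ∈ J(L) : p ≤ a}`. -/
def Jle {L : Type*} [Lattice L] [Fintype L] (a : L) : Finset L :=
  Finset.univ.filter fun p => SupIrred p ∧ p ≤ a

/-! ### Lattice congruences -/

/-- A congruence of a lattice. -/
structure LatCon (N : Type*) [Lattice N] where
  r : N → N → Prop
  refl : ∀ a, r a a
  symm : ∀ {a b}, r a b → r b a
  trans : ∀ {a b c}, r a b → r b c → r a c
  sup_comp : ∀ {a b c d}, r a b → r c d → r (a ⊔ c) (b ⊔ d)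
  inf_comp : ∀ {a b c d}, r a b → r c d → r (a ⊓ c) (b ⊓ d)

/-- Containment of congruences. -/
def LatCon.le {N : Type*} [Lattice N] (c d : LatCon N) : Prop := ∀ a b, c.r a b → d.r a b

/-- A maximal (proper) congruence: a coatom of the congruence lattice. -/
def LatCon.IsMaximal {N : Type*} [Lattice N] (c : LatCon N) : Prop :=
  (∃ a b, ¬ c.r a b) ∧ ∀ d : LatCon N, c.le d → d.le c ∨ ∀ a b, d.r a b

/-! ### Partial linear spaces -/

/-- A partial linear space with 3-element lines: any two distinct lines meet in
at most one point. -/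
structure PLS (α : Type*) where
  J : Finset α
  Λ : Finset (Finset α)
  line_sub : ∀ ℓ ∈ Λ, ℓ ⊆ J
  line_card : ∀ ℓ ∈ Λ, ℓ.card = 3
  line_inter : ∀ ℓ ∈ Λ, ∀ ℓ' ∈ Λ, ℓ ≠ ℓ' → (ℓ ∩ ℓ').card ≤ 1

/-- PLS-rank `rk(J,Λ) = |J| - |Λ|`. -/
def PLS.rk {α : Type*} (S : PLS α) : ℤ := (S.J.card : ℤ) - (S.Λ.card : ℤ)

/-- A path `[p₀,…,p_{n-1}]` together with its lines `ℓᵢ = [pᵢ,pᵢ₊₁]` (`i+1 < n`):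
the lines exist, are distinct, and consecutive lines are the only intersecting ones. -/
structure PLSPath (α : Type*) where
  n : ℕ
  two_le : 2 ≤ n
  p : ℕ → α
  line : ℕ → Finset α
  p_mem_left : ∀ i, i + 1 < n → p i ∈ line i
  p_mem_right : ∀ i, i + 1 < n → p (i + 1) ∈ line i
  p_ne : ∀ i, i + 1 < n → p i ≠ p (i + 1)
  lines_ne : ∀ i j, i < j → j + 1 < n → line i ≠ line j
  lines_inter_iff : ∀ i j, i < j → j + 1 < n → ((line i ∩ line j).Nonempty ↔ j = i + 1)

namespace PLSPath
variable {α : Type*}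

/-- The underlying point set `P*` of a path. -/
def ptSet (P : PLSPath α) : Finset α := (Finset.range (P.n - 1)).biUnion P.line

/-- First point of a path. -/
def first (P : PLSPath α) : α := P.p 0

/-- Last point of a path. -/
def last (P : PLSPath α) : α := P.p (P.n - 1)

/-- The set of lines of a path. -/
def lineSet (P : PLSPath α) : Finset (Finset α) := (Finset.range (P.n - 1)).image P.line

/-- The path lies in the line set `Λ`. -/
def In (P : PLSPath α) (Λ : Finset (Finset α)) : Prop := ∀ i, i + 1 < P.n → P.line i ∈ Λ

end PLSPath

/-- A cycle `(p₀,…,p_{n-1})`: a path whose closing line `[p_{n-1},p₀]` exists and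
contains a point not on any path line. -/
structure PLSCycle (α : Type*) extends PLSPath α where
  closing : Finset α
  closing_last : p (n - 1) ∈ closing
  closing_first : p 0 ∈ closing
  closing_new : ∃ q ∈ closing, ∀ i, i + 1 < n → q ∉ line i

namespace PLSCycle
variable {α : Type*}

/-- The cycle lies in the line set `Λ`. -/
def In (C : PLSCycle α) (Λ : Finset (Finset α)) : Prop :=
  C.toPLSPath.In Λ ∧ C.closing ∈ Λ

/-- The `i`-th `C`-line (for `i < n`; the last one is the closing line). -/
def cline (C : PLSCycle α) (i : ℕ) : Finset α :=
  if i + 1 < C.n then C.line i else C.closing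

/-- The underlying point set `C*` of a cycle. -/
def cptSet (C : PLSCycle α) : Finset α := (Finset.range C.n).biUnion C.cline

/-- The set `Λ*` of `C`-lines of a cycle. -/
def clineSet (C : PLSCycle α) : Finset (Finset α) := (Finset.range C.n).image C.cline

/-- `q` is the `C`-midpoint of the `i`-th `C`-line. -/
def IsMidpoint (C : PLSCycle α) (i : ℕ) (q : α) : Prop :=
  q ∈ C.cline i ∧ q ≠ C.p i ∧ q ≠ C.p ((i + 1) % C.n)

/-- `q` is a `C`-midpoint (of some `C`-line). -/
def IsMidpointPt (C : PLSCycle α) (q : α) : Prop := ∃ i < C.n, C.IsMidpoint i q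

/-- The set of `C`-midpoints. -/
def midSet (C : PLSCycle α) : Finset α := C.cptSet.filter fun q => C.IsMidpointPt q

end PLSCycle

/-- Acyclic PLS: it has no cycle. -/
def PLS.Acyclic {α : Type*} (S : PLS α) : Prop := ∀ C : PLSCycle α, ¬ C.In S.Λ

/-- QIMP: each line contains a quasi-isolated point. -/
def PLS.IsQIMP {α : Type*} (S : PLS α) : Prop :=
  ∀ ℓ ∈ S.Λ, ∃ q ∈ ℓ, ∀ ℓ' ∈ S.Λ, ℓ' ≠ ℓ → q ∉ ℓ'

/-- UMP: any line that occurs as a `C`-line has a unique midpoint, independent of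
the cycle. -/
def PLS.IsUMP {α : Type*} (S : PLS α) : Prop :=
  ∀ C C' : PLSCycle α, C.In S.Λ → C'.In S.Λ → ∀ i j, i < C.n → j < C'.n →
    C.cline i = C'.cline j →
    ∀ q q', C.IsMidpoint i q → C'.IsMidpoint j q' → q = q'

/-- `(J,Λ)` is a tree of the PLSes `F 0, …, F (t-1)`. -/
def PLS.IsTreeOf {α : Type*} (S : PLS α) (t : ℕ) (F : ℕ → PLS α) : Prop :=
  S.J = (Finset.range t).biUnion (fun i => (F i).J) ∧
  S.Λ = (Finset.range t).biUnion (fun i => (F i).Λ) ∧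
  ∀ i, 0 < i → i < t → ∃ x, (F i).J ∩ (Finset.range i).biUnion (fun j => (F j).J) = {x}

/-- Sparse PLS: a testifying ordering of the lines exists. -/
def PLS.Sparse {α : Type*} (S : PLS α) : Prop :=
  ∃ ℓ : ℕ → Finset α, (∀ i, i < S.Λ.card → ℓ i ∈ S.Λ) ∧
    (∀ i j, i < S.Λ.card → j < S.Λ.card → i ≠ j → ℓ i ≠ ℓ j) ∧
    ∀ i, i + 1 < S.Λ.card → ¬ ℓ (i + 1) ⊆ (Finset.range (i + 1)).biUnion ℓ

/-- Small girth: every cycle consists of three or four lines. -/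
def PLS.SmallGirth {α : Type*} (S : PLS α) : Prop :=
  ∀ C : PLSCycle α, C.In S.Λ → C.n = 3 ∨ C.n = 4

/-- Type 1 midpoint-link of the cycle `C`: a path from a `C`-midpoint to a
`C`-junction meeting `C*` only in its endpoints. -/
def IsType1Link {α : Type*} (C : PLSCycle α) (P : PLSPath α) : Prop :=
  C.IsMidpointPt P.first ∧ (∃ j < C.n, P.last = C.p j) ∧
    P.ptSet ∩ C.cptSet = {P.first, P.last}

/-- Type 2 midpoint-link of the cycle `C`: a path between two `C`-midpoints meeting
`C*` only in its endpoints. -/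
def IsType2Link {α : Type*} (C : PLSCycle α) (P : PLSPath α) : Prop :=
  C.IsMidpointPt P.first ∧ C.IsMidpointPt P.last ∧ P.first ≠ P.last ∧
    P.ptSet ∩ C.cptSet = {P.first, P.last}

/-- Benign type 1 link: the midpoint and junction sit on a common `C`-line. -/
def Benign1 {α : Type*} (C : PLSCycle α) (P : PLSPath α) : Prop :=
  ∃ i < C.n, P.first ∈ C.cline i ∧ P.last ∈ C.cline i

/-- Benign type 2 link: the two midpoints sit on intersecting `C`-lines. -/
def Benign2 {α : Type*} (C : PLSCycle α) (P : PLSPath α) : Prop :=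
  ∃ i, i < C.n ∧ ∃ j, j < C.n ∧ C.IsMidpoint i P.first ∧ C.IsMidpoint j P.last ∧
    (C.cline i ∩ C.cline j).Nonempty

/-- A benign midpoint-link (of either type). -/
def BenignLink {α : Type*} (C : PLSCycle α) (P : PLSPath α) : Prop :=
  (IsType1Link C P ∧ Benign1 C P) ∨ (IsType2Link C P ∧ Benign2 C P)

/-- BMPL: every midpoint-link of every cycle is benign. -/
def PLS.IsBMPL {α : Type*} (S : PLS α) : Prop :=
  ∀ C : PLSCycle α, C.In S.Λ → ∀ P : PLSPath α, P.In S.Λ →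
    (IsType1Link C P → Benign1 C P) ∧ (IsType2Link C P → Benign2 C P)

/-- All midpoint-links are of type 1, i.e. there are no type 2 midpoint-links. -/
def PLS.OnlyType1Links {α : Type*} (S : PLS α) : Prop :=
  ∀ C : PLSCycle α, C.In S.Λ → ∀ P : PLSPath α, P.In S.Λ → ¬ IsType2Link C P

/-- `S'` arises from `S` by adding the path `P`. -/
def AddsOnePath {α : Type*} (S' S : PLS α) (P : PLSPath α) : Prop :=
  P.In S'.Λ ∧ S'.J = S.J ∪ P.ptSet ∧ S.J ∩ P.ptSet = {P.first, P.last} ∧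
    (∀ i, i + 1 < P.n → P.line i ∉ S.Λ) ∧ S'.Λ = S.Λ ∪ P.lineSet

/-- `S'` arises from `S` by adding a benign midpoint-link. -/
def AddsBenignLink {α : Type*} (S' S : PLS α) : Prop :=
  ∃ (P : PLSPath α) (C : PLSCycle α), C.In S.Λ ∧ AddsOnePath S' S P ∧ BenignLink C P

/-- `S'` arises from `S` by adding a benign midpoint-link of type 1. -/
def AddsBenignLink1 {α : Type*} (S' S : PLS α) : Prop :=
  ∃ (P : PLSPath α) (C : PLSCycle α), C.In S.Λ ∧ AddsOnePath S' S P ∧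
    IsType1Link C P ∧ Benign1 C P

/-- Augmented UMP: obtained from a UMP by iteratively adding benign midpoint-links. -/
def PLS.IsAugmentedUMP {α : Type*} (S : PLS α) : Prop :=
  ∃ S₀ : PLS α, S₀.IsUMP ∧ Relation.ReflTransGen (fun X Y => AddsBenignLink Y X) S₀ S

/-- Augmented UMP of type 1: only benign midpoint-links of type 1 were added. -/
def PLS.IsAugmentedUMP1 {α : Type*} (S : PLS α) : Prop :=
  ∃ S₀ : PLS α, S₀.IsUMP ∧ Relation.ReflTransGen (fun X Y => AddsBenignLink1 Y X) S₀ S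

/-! ### Graphs -/

/-- `T` is the edge set of a triangle of `G`. -/
def IsTriangle {V : Type*} (G : SimpleGraph V) (T : Finset (Sym2 V)) : Prop :=
  ∃ a b c : V, G.Adj a b ∧ G.Adj b c ∧ G.Adj a c ∧ T = {s(a, b), s(b, c), s(a, c)}

/-- `Γ` is the edge set of a circuit of `G`. -/
def IsCircuitSet {V : Type*} (G : SimpleGraph V) (Γ : Finset (Sym2 V)) : Prop :=
  ∃ (v : V) (w : G.Walk v v), w.IsCycle ∧ w.edges.toFinset = Γ

/-- `Γ` is the edge set of a chordless circuit of `G`. -/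
def IsChordlessCircuit {V : Type*} (G : SimpleGraph V) (Γ : Finset (Sym2 V)) : Prop :=
  ∃ (v : V) (w : G.Walk v v), w.IsCycle ∧ w.edges.toFinset = Γ ∧
    ∀ a b : V, a ∈ w.support → b ∈ w.support → G.Adj a b → s(a, b) ∈ Γ

/-- `W` is the edge set of a wheel of `G` (degenerate wheel = triangle). -/
def IsWheel {V : Type*} (G : SimpleGraph V) (W : Finset (Sym2 V)) : Prop :=
  ∃ (n : ℕ) (hub : V) (v : ℕ → V), 2 ≤ n ∧
    (∀ i j, i < n → j < n → i ≠ j → v i ≠ v j) ∧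
    (∀ i, i < n → G.Adj hub (v i)) ∧
    (∀ i, i < n → G.Adj (v i) (v ((i + 1) % n))) ∧
    W = (Finset.range n).image (fun i => s(hub, v i)) ∪
        (Finset.range n).image (fun i => s(v i, v ((i + 1) % n)))

/-- Rank of an edge set `B` in the cycle matroid on the vertex set `V`:
`|V|` minus the number of connected components of `(V, B)`. -/
def grkOn (V : Type*) [Fintype V] (B : Finset (Sym2 V)) : ℕ :=
  Fintype.card V - Nat.card (SimpleGraph.fromEdgeSet (B : Set (Sym2 V))).ConnectedComponent

/-- Rank of the cycle matroid of the graph `G` (on its full edge set). -/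
def graphRank {V : Type*} [Fintype V] (G : SimpleGraph V) : ℕ :=
  Fintype.card V - Nat.card G.ConnectedComponent

/-- Closure of an edge set in the cycle matroid of `G`. -/
def graphCl {V : Type*} [Fintype V] (G : SimpleGraph V) (B : Finset (Sym2 V)) : Set (Sym2 V) :=
  {e | e ∈ G.edgeSet ∧ grkOn V (insert e B) = grkOn V B}

/-- The partition of the vertex set into connected components of `(V, B)`. -/
def compSetoid {V : Type*} (B : Finset (Sym2 V)) : Setoid V :=
  ⟨fun a b => (SimpleGraph.fromEdgeSet (B : Set (Sym2 V))).Reachable a b,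
    ⟨fun a => SimpleGraph.Reachable.refl a, fun h => h.symm, fun h h' => h.trans h'⟩⟩

/-- `ψ` line-preservingly models the PLS `S` by the graph `G`: it is a bijection from
the points onto the edges taking each line to (the edge set of) a triangle. -/
def LinePres {α V : Type*} (S : PLS α) (G : SimpleGraph V) (ψ : α → Sym2 V) : Prop :=
  Set.BijOn ψ (S.J : Set α) G.edgeSet ∧ ∀ ℓ ∈ S.Λ, IsTriangle G (ℓ.image ψ)

/-- Line-preserving rank-modeling by a graph. -/
def LinePresRankModels {α V : Type*} [Fintype V] (S : PLS α) (G : SimpleGraph V)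
    (ψ : α → Sym2 V) : Prop :=
  LinePres S G ψ ∧ (graphRank G : ℤ) = S.rk

/-- Cycle-preservation: the midpoints of each cycle map to a circuit of `G`. -/
def CyclePresCond {α V : Type*} (S : PLS α) (G : SimpleGraph V) (ψ : α → Sym2 V) : Prop :=
  ∀ C : PLSCycle α, C.In S.Λ → IsCircuitSet G (C.midSet.image ψ)

/-- Circuit-friendliness: each chordless circuit of `G` corresponds to a line or to
the set of midpoints of a cycle of `S`. -/
def CircuitFriendlyCond {α V : Type*} (S : PLS α) (G : SimpleGraph V) (ψ : α → Sym2 V) : Prop :=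
  ∀ Γ : Finset (Sym2 V), IsChordlessCircuit G Γ →
    (∃ ℓ ∈ S.Λ, ∀ x ∈ S.J, (ψ x ∈ Γ ↔ x ∈ ℓ)) ∨
    (∃ C : PLSCycle α, C.In S.Λ ∧ ∀ x ∈ S.J, (ψ x ∈ Γ ↔ C.IsMidpointPt x))

/-! ### Matroids -/

/-- A (finite) matroid on a finite ground set, given by its independent sets. -/
structure FinMatroid (β : Type*) where
  E : Finset β
  Indep : Finset β → Prop
  indep_subset : ∀ I, Indep I → I ⊆ E
  indep_empty : Indep ∅
  indep_mono : ∀ I J, Indep J → I ⊆ J → Indep I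
  indep_exchange : ∀ I J, Indep I → Indep J → I.card < J.card →
    ∃ x ∈ J, x ∉ I ∧ Indep (insert x I)

namespace FinMatroid
variable {β : Type*}

/-- Rank of a subset. -/
def rkOn (M : FinMatroid β) (X : Finset β) : ℕ :=
  (X.powerset.filter fun I => M.Indep I).sup Finset.card

/-- Rank of the matroid. -/
def rk (M : FinMatroid β) : ℕ := M.rkOn M.E

/-- Closure of a subset. -/
def cl (M : FinMatroid β) (X : Finset β) : Finset β :=
  M.E.filter fun e => M.rkOn (insert e (X ∩ M.E)) = M.rkOn (X ∩ M.E)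

/-- Simple matroid: all subsets of cardinality at most 2 are independent. -/
def IsSimple (M : FinMatroid β) : Prop :=
  ∀ X : Finset β, X ⊆ M.E → X.card ≤ 2 → M.Indep X

/-- Flat (closed set) of a matroid. -/
def Flat (M : FinMatroid β) (F : Finset β) : Prop := F ⊆ M.E ∧ M.cl F = F

/-- Binary matroid: representable over GF(2). -/
def IsBinary (M : FinMatroid β) : Prop :=
  ∃ (m : ℕ) (ρ : β → (Fin m → ZMod 2)),
    ∀ I : Finset β, I ⊆ M.E →
      (M.Indep I ↔ LinearIndependent (ZMod 2) fun x : {y // y ∈ I} => ρ x.1)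

/-- Graphic matroid: isomorphic to the cycle matroid of a graph. -/
def IsGraphic (M : FinMatroid β) : Prop :=
  ∃ (k : ℕ) (G : SimpleGraph (Fin k)) (φ : β → Sym2 (Fin k)),
    Set.BijOn φ (M.E : Set β) G.edgeSet ∧
    ∀ I : Finset β, I ⊆ M.E →
      (M.Indep I ↔ ∀ Γ : Finset (Sym2 (Fin k)), IsCircuitSet G Γ →
        ¬ (Γ : Set (Sym2 (Fin k))) ⊆ φ '' (I : Set β))

end FinMatroid

/-- `ψ` line-preservingly models the PLS `S` by the matroid `M`: a bijection from the
points onto the ground set taking each line to a dependent set. -/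
def LinePresMatroid {α β : Type*} (S : PLS α) (M : FinMatroid β) (ψ : α → β) : Prop :=
  Set.BijOn ψ (S.J : Set α) (M.E : Set β) ∧ ∀ ℓ ∈ S.Λ, ¬ M.Indep (ℓ.image ψ)

/-- Graph-trigger: every simple binary matroid that line-preservingly rank-models `S`
is graphic. -/
def PLS.GraphTrigger {α : Type*} (S : PLS α) : Prop :=
  ∀ (β : Type) (M : FinMatroid β) (ψ : α → β),
    M.IsSimple → M.IsBinary → LinePresMatroid S M ψ → (M.rk : ℤ) = S.rk → M.IsGraphic

/-! ### Lines of modular lattices, MoPLSes, lattice-modeling -/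

/-- All pairs of distinct elements of `m` have the same join. -/
def ConstJoin {L : Type*} [Lattice L] (m : Finset L) : Prop :=
  ∀ p ∈ m, ∀ q ∈ m, ∀ p' ∈ m, ∀ q' ∈ m, p ≠ q → p' ≠ q' → p ⊔ q = p' ⊔ q'

/-- A line of a modular lattice: a 3-element subset of `J(L)` with constant pairwise
join, maximal with this property. -/
def IsLine (L : Type*) [Lattice L] [Fintype L] (ℓ : Finset L) : Prop :=
  ℓ ⊆ JFinset L ∧ ℓ.card = 3 ∧ ConstJoin ℓ ∧
    ∀ m : Finset L, m ⊆ JFinset L → ℓ ⊆ m → ConstJoin m → m = ℓ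

/-- The join of a line. -/
def lineJoin {L : Type*} [Lattice L] [BoundedOrder L] (ℓ : Finset L) : L := ℓ.sup id

/-- A MoPLS of `L`: the PLS on `J(L)` whose lines form a maximal family of pairwise
inequivalent lines of `L`. -/
def IsMoPLS (L : Type*) [Lattice L] [BoundedOrder L] [Fintype L] (S : PLS L) : Prop :=
  S.J = JFinset L ∧ (∀ ℓ ∈ S.Λ, IsLine L ℓ) ∧
    (∀ ℓ ∈ S.Λ, ∀ ℓ' ∈ S.Λ, ℓ ≠ ℓ' → lineJoin ℓ ≠ lineJoin ℓ') ∧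
    ∀ m : Finset L, IsLine L m → ∃ ℓ ∈ S.Λ, lineJoin ℓ = lineJoin m

/-- A graph lattice-models a finite lattice `L` via `φ`: `φ` is a bijection from
`J(L)` onto the edge set, all sets `φ(J(a))` are closed in the cycle matroid, and the
rank of the cycle matroid equals the height of `L`. -/
def LatticeModelsGraph (L : Type*) [Lattice L] [BoundedOrder L] [Fintype L]
    {V : Type*} [Fintype V] (G : SimpleGraph V) (φ : L → Sym2 V) : Prop :=
  Set.BijOn φ (JFinset L : Set L) G.edgeSet ∧
    (∀ a : L, graphCl G ((Jle a).image φ) = (((Jle a).image φ : Finset (Sym2 V)) : Set (Sym2 V))) ∧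
    graphRank G = latHeight L



set_option linter.unusedSectionVars false

namespace TPEAux

variable {N : Type*} [Lattice N]

lemma latConExt {c d : LatCon N} (h : c.r = d.r) : c = d := by
  cases c; cases d; cases h; rfl

lemma rel_inf_sup (c : LatCon N) {u v : N} (h : c.r u v) : c.r (u ⊓ v) (u ⊔ v) := by
  have h1 : c.r (u ⊔ v) v := by simpa using c.sup_comp h (c.refl v)
  have h2 : c.r (u ⊓ v) v := by simpa using c.inf_comp h (c.refl v)
  exact c.trans h2 (c.symm h1)

lemma rel_of_between (c : LatCon N) {p r x y : N} (h : c.r p r)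
    (hpx : p ≤ x) (hxy : x ≤ y) (hyr : y ≤ r) : c.r x y := by
  have h1 : c.r x r := by
    have h0 := c.sup_comp h (c.refl x)
    rwa [sup_eq_right.mpr hpx, sup_eq_left.mpr (hxy.trans hyr)] at h0
  have h2 := c.inf_comp h1 (c.refl y)
  rwa [inf_eq_left.mpr hxy, inf_eq_right.mpr hyr] at h2

lemma exists_covBy_le [Fintype N] {p q : N} (h : p < q) : ∃ z, p ⋖ z ∧ z ≤ q := by
  classical
  obtain ⟨m, hmS, hmin⟩ := Finset.exists_minimal
    (s := Finset.univ.filter fun z => p < z ∧ z ≤ q) ⟨q, by simp [h]⟩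
  simp only [Finset.mem_filter, Finset.mem_univ, true_and] at hmS
  refine ⟨m, ⟨hmS.1, fun c hc1 hc2 => ?_⟩, hmS.2⟩
  exact absurd (hmin (by simp [Finset.mem_filter, hc1, hc2.le.trans hmS.2]) hc2.le) hc2.not_ge

lemma all_of_covers [Fintype N] (d : LatCon N)
    (h : ∀ x y : N, x ⋖ y → d.r x y) (u v : N) : d.r u v := by
  classical
  have key : ∀ p q : N, p ≤ q → d.r p q := by
    intro p q hpq
    obtain ⟨m, hmS, hmax⟩ := Finset.exists_maximal
      (s := Finset.univ.filter fun z => z ≤ q ∧ d.r p z) ⟨p, by simp [hpq, d.refl]⟩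
    simp only [Finset.mem_filter, Finset.mem_univ, true_and] at hmS
    by_cases hmq : m = q
    · exact hmq ▸ hmS.2
    · obtain ⟨z, hz1, hz2⟩ := exists_covBy_le (lt_of_le_of_ne hmS.1 hmq)
      exact absurd (hmax (by simp [Finset.mem_filter, hz2, d.trans hmS.2 (h _ _ hz1)]) hz1.le) hz1.lt.not_ge
  exact d.trans (d.symm (key _ _ inf_le_left)) (key _ _ inf_le_right)

/-! ### Projectivity of prime quotients -/

def Persp (p q : N × N) : Prop :=
  (p.1 = p.2 ⊓ q.1 ∧ q.2 = p.2 ⊔ q.1) ∨ (q.1 = q.2 ⊓ p.1 ∧ p.2 = q.2 ⊔ p.1)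

lemma persp_symm {p q : N × N} (h : Persp p q) : Persp q p := Or.symm h

def MProj (p q : N × N) : Prop := Relation.ReflTransGen Persp p q

lemma mproj_symm {p q : N × N} (h : MProj p q) : MProj q p :=
  @Std.Symm.symm _ _ (@Relation.ReflTransGen.stdSymm _ _ ⟨fun _ _ => persp_symm⟩) _ _ h

lemma rel_of_persp (d : LatCon N) {p q : N × N} (hp : Persp p q) (h : d.r p.1 p.2) :
    d.r q.1 q.2 := by
  rcases hp with ⟨h1, h2⟩ | ⟨h1, h2⟩
  · have hx : p.1 ≤ q.1 := h1.le.trans inf_le_right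
    have h0 := d.sup_comp h (d.refl q.1)
    rwa [sup_eq_right.mpr hx, ← h2] at h0
  · have hy : q.2 ≤ p.2 := h2.ge.trans' le_sup_left
    have h0 := d.inf_comp h (d.refl q.2)
    rwa [inf_eq_right.mpr hy, inf_comm p.1 q.2, ← h1] at h0

lemma rel_of_mproj (d : LatCon N) {p q : N × N} (hp : MProj p q) (h : d.r p.1 p.2) :
    d.r q.1 q.2 := by
  induction hp with
  | refl => exact h
  | tail _ hstep ih => exact rel_of_persp d hstep ih

/-- No prime quotient in `[p,q]` is projective to `(a,b)`. -/
def Dno (a b p q : N) : Prop :=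
  ∀ x y : N, p ≤ x → y ≤ q → x ⋖ y → ¬ MProj (x, y) (a, b)

lemma Dno.mono {a b p q p' q' : N} (h : Dno a b p q) (hp : p ≤ p') (hq : q' ≤ q) :
    Dno a b p' q' := fun x y hx hy hc => h x y (hp.trans hx) (hy.trans hq) hc

variable [IsModularLattice N]

lemma modular_cancel {x y q : N} (hxy : x ≤ y)
    (h1 : x ⊓ q = y ⊓ q) (h2 : x ⊔ q = y ⊔ q) : x = y := by
  have hy : y ≤ x ⊔ q := h2 ▸ le_sup_left
  have h3 : (x ⊔ q) ⊓ y = x ⊔ q ⊓ y := sup_inf_assoc_of_le q hxy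
  rw [inf_eq_right.mpr hy, inf_comm q y, ← h1, sup_inf_self] at h3
  exact h3.symm

lemma pd_meet {x y q : N} (hc : x ⋖ y) (hne : x ⊓ q ≠ y ⊓ q) :
    (x ⊓ q) ⋖ (y ⊓ q) ∧ Persp ((x ⊓ q, y ⊓ q) : N × N) (x, y) := by
  set z := y ⊓ q with hz
  have hxz : x ⊓ z = x ⊓ q := by rw [hz, ← inf_assoc, inf_eq_left.mpr hc.le]
  have hnzx : ¬ z ≤ x := by
    intro hzx
    exact hne (le_antisymm (inf_le_inf_right q hc.le) (le_inf hzx inf_le_right))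
  have hxzy : x ⊔ z = y := by
    rcases hc.eq_or_eq le_sup_left (sup_le hc.le inf_le_left) with h | h
    · exact absurd (le_sup_right.trans h.le) hnzx
    · exact h
  constructor
  · constructor
    · exact lt_of_le_of_ne (inf_le_inf_right q hc.le) hne
    · intro c hc1 hc2
      have hcz : c ≤ z := hc2.le
      have hxc : x ⊓ q ≤ c := hc1.le
      rcases hc.eq_or_eq (le_sup_right : x ≤ c ⊔ x) (sup_le (hcz.trans inf_le_left) hc.le) with h | h
      · -- c ⊔ x = x, so c ≤ x ⊓ q = c, contradiction with hc1
        have : c ≤ x ⊓ q := le_inf (le_sup_left.trans h.le) (hcz.trans inf_le_right)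
        exact absurd (le_antisymm this hxc).symm hc1.ne
      · -- c ⊔ x = y, show c = z
        have hmod : (c ⊔ x) ⊓ z = c ⊔ x ⊓ z := sup_inf_assoc_of_le x hcz
        rw [h, inf_eq_right.mpr (inf_le_left : y ⊓ q ≤ y), hxz, sup_eq_left.mpr hxc] at hmod
        exact absurd hmod.symm hc2.ne
  · left
    refine ⟨?_, ?_⟩ <;> simp only []
    · rw [inf_comm z x, hxz]
    · rw [sup_comm, hxzy]

lemma pd_join {x y q : N} (hc : x ⋖ y) (hne : x ⊔ q ≠ y ⊔ q) :
    (x ⊔ q) ⋖ (y ⊔ q) ∧ Persp ((x, y) : N × N) (x ⊔ q, y ⊔ q) := by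
  set z := x ⊔ q with hz
  have hnyz : ¬ y ≤ z := by
    intro hyz
    exact hne (le_antisymm (sup_le_sup_right hc.le q) (sup_le hyz le_sup_right))
  have hyz : y ⊓ z = x := by
    rcases hc.eq_or_eq (le_inf hc.le le_sup_left) inf_le_left with h | h
    · exact h
    · exact absurd (by rw [← h]; exact inf_le_right) hnyz
  have hsup : y ⊔ z = y ⊔ q := by rw [hz, ← sup_assoc, sup_eq_left.mpr hc.le]
  constructor
  · constructor
    · exact lt_of_le_of_ne (sup_le_sup_right hc.le q) hne
    · intro c hc1 hc2
      have hzc : z ≤ c := hc1.le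
      have hxz : x ≤ z := by rw [← hyz]; exact inf_le_right
      have hxyc : x ≤ y ⊓ c := by rw [← hyz]; exact inf_le_inf_left y hzc
      rcases hc.eq_or_eq hxyc inf_le_left with h | h
      · -- y ⊓ c = x : show c = z
        have hmod : (z ⊔ y) ⊓ c = z ⊔ y ⊓ c := sup_inf_assoc_of_le y hzc
        have hzy : z ⊔ y = y ⊔ q := by rw [sup_comm z y, hsup]
        rw [hzy, inf_eq_right.mpr hc2.le, h, sup_eq_left.mpr hxz] at hmod
        exact absurd hmod hc1.ne'
      · -- y ⊓ c = y : y ≤ c so y ⊔ q ≤ c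
        have hyc : y ≤ c := by rw [← h]; exact inf_le_right
        have : y ⊔ q ≤ c := sup_le hyc (le_sup_right.trans hzc)
        exact absurd this (not_le_of_gt hc2)
  · left
    exact ⟨hyz.symm, hsup.symm⟩

lemma Dno.compose {a b p q r : N} (hpq : p ≤ q) (hqr : q ≤ r)
    (h1 : Dno a b p q) (h2 : Dno a b q r) : Dno a b p r := by
  intro x y hx hy hc hproj
  by_cases hm : x ⊓ q = y ⊓ q
  · by_cases hj : x ⊔ q = y ⊔ q
    · exact hc.lt.ne (modular_cancel hc.le hm hj)
    · obtain ⟨hcov, hpersp⟩ := pd_join hc hj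
      exact h2 (x ⊔ q) (y ⊔ q) le_sup_right (sup_le hy hqr) hcov
        (Relation.ReflTransGen.head (persp_symm hpersp) hproj)
  · obtain ⟨hcov, hpersp⟩ := pd_meet hc hm
    exact h1 (x ⊓ q) (y ⊓ q) (le_inf hx hpq) inf_le_right hcov
      (Relation.ReflTransGen.head hpersp hproj)

lemma Dno.sup_right {a b p q : N} (hpq : p ≤ q) (h : Dno a b p q) (w : N) :
    Dno a b (p ⊔ w) (q ⊔ w) := by
  intro x y hx hy hc hproj
  have hwx : w ≤ x := le_sup_right.trans hx
  have hwy : w ≤ y := hwx.trans hc.le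
  have hne : x ⊓ q ≠ y ⊓ q := by
    intro heq
    apply hc.lt.ne
    have hx2 : x ≤ w ⊔ q := (hc.le.trans hy).trans (by rw [sup_comm])
    have hy2 : y ≤ w ⊔ q := hy.trans (by rw [sup_comm])
    have ex : x = w ⊔ q ⊓ x := by
      rw [← sup_inf_assoc_of_le q hwx, inf_eq_right.mpr hx2]
    have ey : y = w ⊔ q ⊓ y := by
      rw [← sup_inf_assoc_of_le q hwy, inf_eq_right.mpr hy2]
    rw [ex, ey, inf_comm q x, inf_comm q y, heq]
  obtain ⟨hcov, hpersp⟩ := pd_meet hc hne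
  exact h (x ⊓ q) (y ⊓ q) (le_inf (le_sup_left.trans hx) hpq) inf_le_right hcov
    (Relation.ReflTransGen.head hpersp hproj)

lemma Dno.inf_right {a b p q : N} (hpq : p ≤ q) (h : Dno a b p q) (w : N) :
    Dno a b (p ⊓ w) (q ⊓ w) := by
  intro x y hx hy hc hproj
  have hyw : y ≤ w := hy.trans inf_le_right
  have hxw : x ≤ w := hc.le.trans hyw
  have hne : x ⊔ p ≠ y ⊔ p := by
    intro heq
    apply hc.lt.ne
    have ex : (x ⊔ p) ⊓ w = x := by
      rw [sup_inf_assoc_of_le p hxw, sup_eq_left.mpr hx]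
    have ey : (y ⊔ p) ⊓ w = y := by
      rw [sup_inf_assoc_of_le p hyw, sup_eq_left.mpr (hx.trans hc.le)]
    rw [← ex, ← ey, heq]
  obtain ⟨hcov, hpersp⟩ := pd_join hc hne
  exact h (x ⊔ p) (y ⊔ p) le_sup_right (sup_le (hy.trans inf_le_left) hpq) hcov
    (Relation.ReflTransGen.head (persp_symm hpersp) hproj)


/-! ### The coatom congruence attached to a prime quotient -/

def crel (a b u v : N) : Prop := Dno a b (u ⊓ v) (u ⊔ v)

lemma crel_refl (a b u : N) : crel a b u u := by
  intro x y hx hy hc _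
  have h1 : u ≤ x := by simpa using hx
  have h2 : y ≤ u := by simpa using hy
  exact absurd h1 (hc.lt.trans_le h2).not_ge

lemma crel_symm {a b u v : N} (h : crel a b u v) : crel a b v u := by
  show Dno a b (v ⊓ u) (v ⊔ u)
  rwa [inf_comm, sup_comm]

lemma crel_trans {a b u v w : N} (h1 : crel a b u v) (h2 : crel a b v w) : crel a b u w := by
  set a1 := u ⊓ v with ha1
  set b1 := u ⊔ v with hb1
  set a2 := v ⊓ w with ha2
  set b2 := v ⊔ w with hb2
  have hA : Dno a b (a1 ⊔ a2) (b1 ⊔ a2) := h1.sup_right inf_le_sup a2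
  have hB : Dno a b (b1 ⊔ a2) (b1 ⊔ b2) := by
    have := h2.sup_right inf_le_sup b1
    rwa [sup_comm a2 b1, sup_comm b2 b1] at this
  have hup : Dno a b (a1 ⊔ a2) (b1 ⊔ b2) :=
    Dno.compose (sup_le_sup_right inf_le_sup a2) (sup_le_sup_left inf_le_sup b1) hA hB
  have hC : Dno a b (a1 ⊓ a2) (a1 ⊓ b2) := by
    have := h2.inf_right inf_le_sup a1
    rwa [inf_comm a2 a1, inf_comm b2 a1] at this
  have hD : Dno a b (a1 ⊓ b2) (b1 ⊓ b2) := h1.inf_right inf_le_sup b2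
  have hdown : Dno a b (a1 ⊓ a2) (b1 ⊓ b2) :=
    Dno.compose (inf_le_inf_left a1 inf_le_sup) (inf_le_inf_right b2 inf_le_sup) hC hD
  have hmidle : a1 ⊔ a2 ≤ b1 ⊓ b2 := by
    have e1 : a1 ≤ v := inf_le_right
    have e2 : a2 ≤ v := inf_le_left
    have e3 : v ≤ b1 := le_sup_right
    have e4 : v ≤ b2 := le_sup_left
    exact le_inf (sup_le (e1.trans e3) (e2.trans e3)) (sup_le (e1.trans e4) (e2.trans e4))
  have hup' : Dno a b (b1 ⊓ b2) (b1 ⊔ b2) := hup.mono hmidle le_rfl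
  have m0 : a1 ⊓ a2 ≤ b1 ⊓ b2 := inf_le_inf inf_le_sup inf_le_sup
  have hall : Dno a b (a1 ⊓ a2) (b1 ⊔ b2) := Dno.compose m0 inf_le_sup hdown hup'
  have m1 : a1 ⊓ a2 ≤ u ⊓ w := by
    rw [ha1, ha2]
    exact le_inf (inf_le_left.trans inf_le_left) (inf_le_right.trans inf_le_right)
  have m2 : u ⊔ w ≤ b1 ⊔ b2 := by
    rw [hb1, hb2]
    exact sup_le (le_sup_left.trans le_sup_left) (le_sup_right.trans le_sup_right)
  exact hall.mono m1 m2

lemma crel_sup_one {a b u v : N} (w : N) (h : crel a b u v) : crel a b (u ⊔ w) (v ⊔ w) := by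
  have h2 := h.sup_right inf_le_sup w
  exact h2.mono
    (le_inf (sup_le_sup_right inf_le_left w) (sup_le_sup_right inf_le_right w))
    (sup_le (sup_le_sup_right le_sup_left w) (sup_le_sup_right le_sup_right w))

lemma crel_inf_one {a b u v : N} (w : N) (h : crel a b u v) : crel a b (u ⊓ w) (v ⊓ w) := by
  have h2 := h.inf_right inf_le_sup w
  have e1 : u ⊓ v ⊓ w ≤ u := inf_le_left.trans inf_le_left
  have e2 : u ⊓ v ⊓ w ≤ v := inf_le_left.trans inf_le_right
  have e3 : u ⊓ v ⊓ w ≤ w := inf_le_right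
  exact h2.mono (le_inf (le_inf e1 e3) (le_inf e2 e3))
    (sup_le (inf_le_inf_right w le_sup_left) (inf_le_inf_right w le_sup_right))

def thetaC (a b : N) : LatCon N where
  r := crel a b
  refl := crel_refl a b
  symm := crel_symm
  trans := crel_trans
  sup_comp := by
    intro x y z t h h'
    have s1 : crel a b (x ⊔ z) (y ⊔ z) := crel_sup_one z h
    have s2 : crel a b (z ⊔ y) (t ⊔ y) := crel_sup_one y h'
    rw [sup_comm z y, sup_comm t y] at s2
    exact crel_trans s1 s2
  inf_comp := by
    intro x y z t h h'
    have s1 : crel a b (x ⊓ z) (y ⊓ z) := crel_inf_one z h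
    have s2 : crel a b (z ⊓ y) (t ⊓ y) := crel_inf_one y h'
    rw [inf_comm z y, inf_comm t y] at s2
    exact crel_trans s1 s2

lemma thetaC_not_rel {a b : N} (hab : a ⋖ b) : ¬ (thetaC a b).r a b := fun h =>
  h a b inf_le_left le_sup_right hab Relation.ReflTransGen.refl

lemma thetaC_isMaximal [Fintype N] {a b : N} (hab : a ⋖ b) : (thetaC a b).IsMaximal := by
  constructor
  · exact ⟨a, b, thetaC_not_rel hab⟩
  · intro d hle
    by_cases hd : d.r a b
    · right
      refine all_of_covers d ?_
      intro x y hxy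
      by_cases hp : MProj ((a, b) : N × N) ((x, y) : N × N)
      · exact rel_of_mproj d hp hd
      · apply hle
        intro x' y' hx' hy' hc' hproj'
        have hx'' : x ≤ x' := by rwa [inf_eq_left.mpr hxy.le] at hx'
        have hy'' : y' ≤ y := by rwa [sup_eq_right.mpr hxy.le] at hy'
        have hx3 : x' = x := by
          rcases hxy.eq_or_eq hx'' (hc'.le.trans hy'') with h | h
          · exact h
          · exfalso; rw [h] at hc'; exact hc'.lt.not_ge hy''
        subst hx3
        have hy3 : y' = y := by
          rcases hxy.eq_or_eq (hc'.le) hy'' with h | h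
          · exfalso; rw [h] at hc'; exact lt_irrefl _ hc'.lt
          · exact h
        subst hy3
        exact hp (mproj_symm hproj')
    · left
      intro u v huv x y hx hy hcxy hproj
      have h1 : d.r (u ⊓ v) (u ⊔ v) := rel_inf_sup d huv
      have h2 : d.r x y := rel_of_between d h1 hx hcxy.le hy
      exact hd (rel_of_mproj d hproj h2)

lemma exists_maximal_sep [Fintype N] {a b : N} (hab : a ⋖ b) :
    ∃ c : LatCon N, c.IsMaximal ∧ ¬ c.r a b :=
  ⟨thetaC a b, thetaC_isMaximal hab, thetaC_not_rel hab⟩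

/-! ### Uniqueness of the separating maximal congruence -/

def joinCon (c d : LatCon N) : LatCon N where
  r := Relation.ReflTransGen (fun x y => c.r x y ∨ d.r x y)
  refl _ := Relation.ReflTransGen.refl
  symm h := @Std.Symm.symm _ _ (@Relation.ReflTransGen.stdSymm _ _ ⟨fun _ _ hh => hh.imp c.symm d.symm⟩) _ _ h
  trans h h' := Relation.ReflTransGen.trans h h'
  sup_comp := by
    intro x y z t h h'
    have s1 : Relation.ReflTransGen (fun x y => c.r x y ∨ d.r x y) (x ⊔ z) (y ⊔ z) :=
      Relation.ReflTransGen.lift (· ⊔ z)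
        (fun u v hh => hh.imp (fun hc => c.sup_comp hc (c.refl z)) (fun hd => d.sup_comp hd (d.refl z))) _ _ h
    have s2 : Relation.ReflTransGen (fun x y => c.r x y ∨ d.r x y) (y ⊔ z) (y ⊔ t) :=
      Relation.ReflTransGen.lift (y ⊔ ·)
        (fun u v hh => hh.imp (fun hc => c.sup_comp (c.refl y) hc) (fun hd => d.sup_comp (d.refl y) hd)) _ _ h'
    exact s1.trans s2
  inf_comp := by
    intro x y z t h h'
    have s1 : Relation.ReflTransGen (fun x y => c.r x y ∨ d.r x y) (x ⊓ z) (y ⊓ z) :=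
      Relation.ReflTransGen.lift (· ⊓ z)
        (fun u v hh => hh.imp (fun hc => c.inf_comp hc (c.refl z)) (fun hd => d.inf_comp hd (d.refl z))) _ _ h
    have s2 : Relation.ReflTransGen (fun x y => c.r x y ∨ d.r x y) (y ⊓ z) (y ⊓ t) :=
      Relation.ReflTransGen.lift (y ⊓ ·)
        (fun u v hh => hh.imp (fun hc => c.inf_comp (c.refl y) hc) (fun hd => d.inf_comp (d.refl y) hd)) _ _ h'
    exact s1.trans s2

lemma maximal_unique {a b : N} (hab : a ⋖ b) {c d : LatCon N}
    (hc : c.IsMaximal) (hdm : d.IsMaximal) (hca : ¬ c.r a b) (hda : ¬ d.r a b) : c = d := by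
  by_contra hne
  have hcJ : c.le (joinCon c d) := fun u v h => Relation.ReflTransGen.single (Or.inl h)
  have hdJ : d.le (joinCon c d) := fun u v h => Relation.ReflTransGen.single (Or.inr h)
  have hJtop : ∀ u v, (joinCon c d).r u v := by
    rcases hc.2 (joinCon c d) hcJ with h | h
    · have hdc : d.le c := fun u v hv => h u v (hdJ u v hv)
      rcases hdm.2 c hdc with h2 | h2
      · exact absurd (latConExt (by
          funext u v
          exact propext ⟨fun hh => h2 u v hh, fun hh => hdc u v hh⟩)) hne
      · exact absurd (h2 a b) hca
    · exact h
  have key : ∀ z, Relation.ReflTransGen (fun x y => c.r x y ∨ d.r x y) a z →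
      ((z ⊔ a) ⊓ b = a) ∨ (c.r a b ∨ d.r a b) := by
    intro z hz
    induction hz with
    | refl => left; simp [inf_eq_left.mpr hab.le]
    | @tail m z hsteps hstep ih =>
      rcases ih with ih | ih
      · have hmap : c.r ((m ⊔ a) ⊓ b) ((z ⊔ a) ⊓ b) ∨ d.r ((m ⊔ a) ⊓ b) ((z ⊔ a) ⊓ b) :=
          hstep.imp (fun hh => c.inf_comp (c.sup_comp hh (c.refl a)) (c.refl b))
            (fun hh => d.inf_comp (d.sup_comp hh (d.refl a)) (d.refl b))
        rw [ih] at hmap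
        have hw1 : a ≤ (z ⊔ a) ⊓ b := le_inf le_sup_right hab.le
        rcases hab.eq_or_eq hw1 inf_le_right with h | h
        · left; exact h
        · right; rw [← h]; exact hmap
      · right; exact ih
  rcases key b (hJtop a b) with h | h
  · rw [sup_eq_left.mpr hab.le, inf_idem] at h
    exact hab.lt.ne' h
  · rcases h with h | h
    exacts [hca h, hda h]

end TPEAux

namespace TPESet

variable {ι : Type*} {β : ι → Type*}

def sumSetoid (s : ∀ i, Setoid (β i)) : Setoid (Σ i, β i) :=
  Setoid.ker fun x => (⟨x.1, Quotient.mk (s x.1) x.2⟩ : Σ i, Quotient (s i))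

lemma sumSetoid_rel_fst {s : ∀ i, Setoid (β i)} {x y : Σ i, β i}
    (h : sumSetoid s x y) : x.1 = y.1 := by
  have h2 : (⟨x.1, Quotient.mk (s x.1) x.2⟩ : Σ i, Quotient (s i))
      = ⟨y.1, Quotient.mk (s y.1) y.2⟩ := h
  exact (Sigma.mk.inj_iff.mp h2).1

lemma sumSetoid_rel_same {s : ∀ i, Setoid (β i)} {i : ι} {u v : β i} :
    sumSetoid s ⟨i, u⟩ ⟨i, v⟩ ↔ s i u v := by
  rw [sumSetoid, Setoid.ker_def]
  constructor
  · intro h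
    exact Quotient.exact (eq_of_heq (Sigma.mk.inj_iff.mp h).2)
  · intro h
    exact congrArg (Sigma.mk i) (Quotient.sound h)

lemma sumSetoid_mono {s t : ∀ i, Setoid (β i)} (h : ∀ i, s i ≤ t i) :
    sumSetoid s ≤ sumSetoid t := by
  rw [Setoid.le_def]
  rintro ⟨i, u⟩ ⟨j, v⟩ hr
  obtain rfl : i = j := sumSetoid_rel_fst hr
  exact sumSetoid_rel_same.mpr (Setoid.le_def.mp (h i) (sumSetoid_rel_same.mp hr))

lemma sumSetoid_inf (s t : ∀ i, Setoid (β i)) :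
    sumSetoid (fun i => s i ⊓ t i) = sumSetoid s ⊓ sumSetoid t := by
  apply Setoid.ext
  rintro ⟨i, u⟩ ⟨j, v⟩
  constructor
  · intro h
    obtain rfl : i = j := sumSetoid_rel_fst h
    have h2 : (s i ⊓ t i) u v := sumSetoid_rel_same.mp h
    exact ⟨sumSetoid_rel_same.mpr h2.1, sumSetoid_rel_same.mpr h2.2⟩
  · rintro ⟨h1, h2⟩
    obtain rfl : i = j := sumSetoid_rel_fst h1
    exact sumSetoid_rel_same.mpr ⟨sumSetoid_rel_same.mp h1, sumSetoid_rel_same.mp h2⟩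

lemma sumSetoid_sup (s t : ∀ i, Setoid (β i)) :
    sumSetoid (fun i => s i ⊔ t i) = sumSetoid s ⊔ sumSetoid t := by
  apply le_antisymm
  · rw [Setoid.le_def]
    rintro ⟨i, u⟩ ⟨j, v⟩ h
    obtain rfl : i = j := sumSetoid_rel_fst h
    have h2 : (s i ⊔ t i) u v := sumSetoid_rel_same.mp h
    rw [Setoid.sup_eq_eqvGen] at h2
    have h3 : Relation.EqvGen (fun x y => s i x y ∨ t i x y) u v := h2
    clear h2 h
    induction h3 with
    | rel x y hxy =>
      rcases hxy with hxy | hxy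
      · exact Setoid.le_def.mp le_sup_left (sumSetoid_rel_same.mpr hxy)
      · exact Setoid.le_def.mp le_sup_right (sumSetoid_rel_same.mpr hxy)
    | refl x => exact Setoid.refl' _ _
    | symm x y _ ih => exact Setoid.symm' _ ih
    | trans x y z _ _ ih1 ih2 => exact Setoid.trans' _ ih1 ih2
  · exact sup_le (sumSetoid_mono fun i => le_sup_left) (sumSetoid_mono fun i => le_sup_right)

lemma sumSetoid_bot : sumSetoid (fun i => (⊥ : Setoid (β i))) = ⊥ := by
  apply Setoid.ext
  rintro ⟨i, u⟩ ⟨j, v⟩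
  constructor
  · intro h
    obtain rfl : i = j := sumSetoid_rel_fst h
    have h2 : (⊥ : Setoid (β i)) u v := sumSetoid_rel_same.mp h
    have h3 : u = v := h2
    subst h3
    exact Setoid.refl' _ _
  · intro h
    have h2 : (⟨i, u⟩ : Σ i, β i) = ⟨j, v⟩ := h
    obtain ⟨rfl, h3⟩ := Sigma.mk.inj_iff.mp h2
    cases eq_of_heq h3
    exact Setoid.refl' _ _

lemma sumSetoid_covBy {s t : ∀ i, Setoid (β i)} {i0 : ι}
    (hcov : s i0 ⋖ t i0) (heq : ∀ j, j ≠ i0 → s j = t j) :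
    sumSetoid s ⋖ sumSetoid t := by
  have hle : ∀ i, s i ≤ t i := fun i => by
    by_cases h : i = i0
    · subst h; exact hcov.le
    · exact (heq i h).le
  constructor
  · refine lt_of_le_of_ne (sumSetoid_mono hle) ?_
    intro hEq
    apply hcov.lt.ne
    apply Setoid.ext
    intro u v
    rw [← sumSetoid_rel_same (s := s) (i := i0), ← sumSetoid_rel_same (s := t) (i := i0), hEq]
  · intro c hc1 hc2
    set ρ : ∀ i, Setoid (β i) := fun i =>
      ⟨fun u v => c ⟨i, u⟩ ⟨i, v⟩,
        ⟨fun u => Setoid.refl' c _, fun h => Setoid.symm' c h, fun h h' => Setoid.trans' c h h'⟩⟩ with hρ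
    have hrel : ∀ (i) (u v : β i), ρ i u v ↔ c ⟨i, u⟩ ⟨i, v⟩ := fun i u v => Iff.rfl
    have hcρ : c = sumSetoid ρ := by
      apply Setoid.ext
      rintro ⟨i, u⟩ ⟨j, v⟩
      constructor
      · intro h
        obtain rfl : i = j := sumSetoid_rel_fst (Setoid.le_def.mp hc2.le h)
        exact sumSetoid_rel_same.mpr ((hrel i u v).mpr h)
      · intro h
        obtain rfl : i = j := sumSetoid_rel_fst h
        exact (hrel i u v).mp (sumSetoid_rel_same.mp h)
    have hsρ : ∀ i, s i ≤ ρ i := by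
      intro i
      rw [Setoid.le_def]
      intro u v h
      exact (hrel i u v).mpr (Setoid.le_def.mp hc1.le (sumSetoid_rel_same.mpr h))
    have hρt : ∀ i, ρ i ≤ t i := by
      intro i
      rw [Setoid.le_def]
      intro u v h
      have := Setoid.le_def.mp hc2.le ((hrel i u v).mp h)
      exact sumSetoid_rel_same.mp this
    rcases hcov.eq_or_eq (hsρ i0) (hρt i0) with h | h
    · have : ρ = s := by
        funext i
        by_cases hi : i = i0
        · subst hi; exact h
        · exact le_antisymm ((hρt i).trans (heq i hi).ge) (hsρ i)
      rw [hcρ, this] at hc1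
      exact lt_irrefl _ hc1
    · have : ρ = t := by
        funext i
        by_cases hi : i = i0
        · subst hi; exact h
        · exact le_antisymm (hρt i) (by rw [← heq i hi]; exact hsρ i)
      rw [hcρ, this] at hc2
      exact lt_irrefl _ hc2

def setoidComapIso {α γ : Type*} (e : α ≃ γ) : Setoid γ ≃o Setoid α where
  toFun := Setoid.comap e
  invFun := Setoid.comap e.symm
  left_inv := fun r => Setoid.ext fun x y => by
    rw [Setoid.comap_rel, Setoid.comap_rel, e.apply_symm_apply, e.apply_symm_apply]
  right_inv := fun r => Setoid.ext fun x y => by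
    rw [Setoid.comap_rel, Setoid.comap_rel, e.symm_apply_apply, e.symm_apply_apply]
  map_rel_iff' := by
    intro r r'
    constructor
    · intro h
      rw [Setoid.le_def]
      intro x y hxy
      have := Setoid.le_def.mp h (x := e.symm x) (y := e.symm y)
        (by show r (e (e.symm x)) (e (e.symm y)); simpa using hxy)
      change r' (e (e.symm x)) (e (e.symm y)) at this; simpa using this
    · intro h
      rw [Setoid.le_def]
      intro x y hxy
      rw [Setoid.comap_rel] at hxy ⊢
      exact Setoid.le_def.mp h hxy

end TPESet

theorem statement_0 {N : Type} [Lattice N] [BoundedOrder N] [Fintype N] [IsModularLattice N]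
    (s : ℕ) (θ : Fin s → LatCon N)
    (hmax : ∀ i, (θ i).IsMaximal)
    (hinj : Function.Injective θ)
    (hall : ∀ c : LatCon N, c.IsMaximal → ∃ i, c = θ i)
    (Ni : Fin s → Type) [∀ i, Lattice (Ni i)] [∀ i, BoundedOrder (Ni i)] [∀ i, Fintype (Ni i)]
    (T : ∀ i, N → Ni i)
    (hTsup : ∀ i a b, T i (a ⊔ b) = T i a ⊔ T i b)
    (hTinf : ∀ i a b, T i (a ⊓ b) = T i a ⊓ T i b)
    (hTsurj : ∀ i, Function.Surjective (T i))
    (hker : ∀ i a b, (θ i).r a b ↔ T i a = T i b)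
    (n : Fin s → ℕ)
    (hf : ∀ i, ∃ f : Ni i → Setoid (Fin (n i)), IsTightEmbedding f) :
    ∃ g : N → Setoid (Fin (Finset.univ.sum n)), IsTightEmbedding g := by
  classical
  choose f hfspec using hf
  have Tmono : ∀ i, ∀ {a b : N}, a ≤ b → T i a ≤ T i b := by
    intro i a b hab
    have h : T i a ⊔ T i b = T i b := by rw [← hTsup, sup_eq_right.mpr hab]
    exact le_sup_left.trans h.le
  have hTbot : ∀ i, T i ⊥ = ⊥ := by
    intro i
    obtain ⟨x, hx⟩ := hTsurj i (⊥ : Ni i)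
    exact le_antisymm (hx ▸ Tmono i bot_le) bot_le
  have Tcov : ∀ (i : Fin s), ∀ {a b : N}, a ⋖ b → T i a ≠ T i b → T i a ⋖ T i b := by
    intro i a b hab hne
    constructor
    · exact lt_of_le_of_ne (Tmono i hab.le) hne
    · intro x h1 h2
      obtain ⟨c, rfl⟩ := hTsurj i x
      have hc1 : T i ((a ⊔ c) ⊓ b) = T i c := by
        rw [hTinf, hTsup, sup_eq_right.mpr h1.le, inf_eq_left.mpr h2.le]
      rcases hab.eq_or_eq (le_inf le_sup_left hab.le) inf_le_right with h | h
      · rw [h] at hc1; exact h1.ne hc1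
      · rw [h] at hc1; exact h2.ne hc1.symm
  have hcard : Fintype.card (Σ i : Fin s, Fin (n i)) = Fintype.card (Fin (Finset.univ.sum n)) := by
    simp [Fintype.card_sigma]
  let e : (Σ i : Fin s, Fin (n i)) ≃ Fin (Finset.univ.sum n) := Fintype.equivOfCardEq hcard
  let Φ : Setoid (Σ i : Fin s, Fin (n i)) ≃o Setoid (Fin (Finset.univ.sum n)) :=
    TPESet.setoidComapIso e.symm
  refine ⟨fun a => Φ (TPESet.sumSetoid fun i => f i (T i a)), ?_, ?_, ?_, ?_⟩
  · intro a b
    have hfun : (fun i => f i (T i (a ⊔ b))) = fun i => f i (T i a) ⊔ f i (T i b) := by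
      funext i; rw [hTsup, (hfspec i).1]
    show Φ _ = Φ _ ⊔ Φ _
    rw [hfun, TPESet.sumSetoid_sup, OrderIso.map_sup]
  · intro a b
    have hfun : (fun i => f i (T i (a ⊓ b))) = fun i => f i (T i a) ⊓ f i (T i b) := by
      funext i; rw [hTinf, (hfspec i).2.1]
    show Φ _ = Φ _ ⊓ Φ _
    rw [hfun, TPESet.sumSetoid_inf, OrderIso.map_inf]
  · have hfun : (fun i => f i (T i ⊥)) = fun i => (⊥ : Setoid (Fin (n i))) := by
      funext i; rw [hTbot i, (hfspec i).2.2.1]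
    show Φ _ = ⊥
    rw [hfun, TPESet.sumSetoid_bot, OrderIso.map_bot]
  · intro a b hab
    obtain ⟨c, hcm, hcab⟩ := TPEAux.exists_maximal_sep hab
    obtain ⟨i0, rfl⟩ := hall c hcm
    have hTne : T i0 a ≠ T i0 b := fun h => hcab ((hker i0 a b).mpr h)
    have hcov : f i0 (T i0 a) ⋖ f i0 (T i0 b) :=
      (hfspec i0).2.2.2 _ _ (Tcov i0 hab hTne)
    have hother : ∀ j, j ≠ i0 → f j (T j a) = f j (T j b) := by
      intro j hj
      by_cases hjr : (θ j).r a b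
      · rw [(hker j a b).mp hjr]
      · exact absurd (hinj (TPEAux.maximal_unique hab (hmax j) (hmax i0) hjr hcab)) hj
    have hsum := TPESet.sumSetoid_covBy (s := fun i => f i (T i a))
      (t := fun i => f i (T i b)) hcov hother
    exact (apply_covBy_apply_iff Φ).mpr hsum

end
end

section
/- If a finite modular lattice L admits a tight embedding into a partition lattice Part(n), then L is thin: L is 2-distributive and has no cover-preserving sublattice isomorphic to M_4. -/
open scoped Classical
noncomputable section

namespace ThinAux

variable {α : Type*}

/-- Merge the classes of `x0` and `y0` in `π`. -/
def mergeS (π : Setoid α) (x0 y0 : α) : Setoid α :=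
  ⟨fun u v => π u v ∨ (π u x0 ∧ π y0 v) ∨ (π u y0 ∧ π x0 v),
   ⟨fun u => Or.inl (π.refl' u),
    by
      rintro u v (h | ⟨h1, h2⟩ | ⟨h1, h2⟩)
      · exact Or.inl (π.symm' h)
      · exact Or.inr (Or.inr ⟨π.symm' h2, π.symm' h1⟩)
      · exact Or.inr (Or.inl ⟨π.symm' h2, π.symm' h1⟩),
    by
      rintro u v w (h | ⟨h1, h2⟩ | ⟨h1, h2⟩) (g | ⟨g1, g2⟩ | ⟨g1, g2⟩)
      · exact Or.inl (π.trans' h g)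
      · exact Or.inr (Or.inl ⟨π.trans' h g1, g2⟩)
      · exact Or.inr (Or.inr ⟨π.trans' h g1, g2⟩)
      · exact Or.inr (Or.inl ⟨h1, π.trans' h2 g⟩)
      · exact Or.inl (π.trans' h1 (π.trans' (π.symm' (π.trans' h2 g1)) g2))
      · exact Or.inl (π.trans' h1 g2)
      · exact Or.inr (Or.inr ⟨h1, π.trans' h2 g⟩)
      · exact Or.inl (π.trans' h1 g2)
      · exact Or.inl (π.trans' h1 (π.trans' (π.symm' (π.trans' h2 g1)) g2))⟩⟩

lemma mergeS_rel {π : Setoid α} {x0 y0 u v : α} :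
    mergeS π x0 y0 u v ↔ (π u v ∨ (π u x0 ∧ π y0 v) ∨ (π u y0 ∧ π x0 v)) := Iff.rfl

lemma le_mergeS (π : Setoid α) (x0 y0 : α) : π ≤ mergeS π x0 y0 :=
  fun _ _ h => Or.inl h

lemma mergeS_self (π : Setoid α) (x0 y0 : α) : mergeS π x0 y0 x0 y0 :=
  Or.inr (Or.inl ⟨π.refl' x0, π.refl' y0⟩)

lemma mergeS_comm (π : Setoid α) (x0 y0 : α) : mergeS π x0 y0 = mergeS π y0 x0 := by
  apply Setoid.ext
  intro u v
  rw [mergeS_rel, mergeS_rel]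
  tauto

lemma mergeS_congr {π : Setoid α} {x0 y0 x1 y1 : α} (hx : π x0 x1) (hy : π y0 y1) :
    mergeS π x0 y0 = mergeS π x1 y1 := by
  apply Setoid.ext
  intro u v
  rw [mergeS_rel, mergeS_rel]
  constructor
  · rintro (h | ⟨h1, h2⟩ | ⟨h1, h2⟩)
    · exact Or.inl h
    · exact Or.inr (Or.inl ⟨π.trans' h1 hx, π.trans' (π.symm' hy) h2⟩)
    · exact Or.inr (Or.inr ⟨π.trans' h1 hy, π.trans' (π.symm' hx) h2⟩)
  · rintro (h | ⟨h1, h2⟩ | ⟨h1, h2⟩)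
    · exact Or.inl h
    · exact Or.inr (Or.inl ⟨π.trans' h1 (π.symm' hx), π.trans' hy h2⟩)
    · exact Or.inr (Or.inr ⟨π.trans' h1 (π.symm' hy), π.trans' hx h2⟩)

/-- A cover in the setoid lattice is a merge of two classes. -/
lemma covBy_eq_mergeS {π ρ : Setoid α} (h : π ⋖ ρ) :
    ∃ x0 y0, ¬ π x0 y0 ∧ ρ = mergeS π x0 y0 := by
  have hlt := h.1
  have hle : π ≤ ρ := hlt.le
  have : ¬ ρ ≤ π := fun hc => absurd (le_antisymm hle hc) hlt.ne
  rw [Setoid.le_def] at this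
  push_neg at this
  obtain ⟨x0, y0, hxy, hnxy⟩ := this
  refine ⟨x0, y0, hnxy, ?_⟩
  have h1 : π < mergeS π x0 y0 := by
    refine lt_of_le_of_ne (le_mergeS π x0 y0) ?_
    intro hc
    exact hnxy (by rw [hc]; exact mergeS_self π x0 y0)
  have h2 : mergeS π x0 y0 ≤ ρ := by
    rintro u v (hr | ⟨h1', h2'⟩ | ⟨h1', h2'⟩)
    · exact hle hr
    · exact ρ.trans' (hle h1') (ρ.trans' hxy (hle h2'))
    · exact ρ.trans' (hle h1') (ρ.trans' (ρ.symm' hxy) (hle h2'))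
  exact ((h2.lt_or_eq).resolve_left (h.2 h1)).symm


/-- The monotone map between quotients. -/
def qmap {π σ : Setoid α} (h : π ≤ σ) : Quotient π → Quotient σ :=
  Quotient.map' id (fun _ _ hab => h hab)

lemma qmap_mk {π σ : Setoid α} (h : π ≤ σ) (a : α) :
    qmap h (Quotient.mk'' a) = Quotient.mk'' a := rfl

lemma qmap_surjective {π σ : Setoid α} (h : π ≤ σ) : Function.Surjective (qmap h) := by
  intro q
  refine Quotient.inductionOn' q (fun a => ⟨Quotient.mk'' a, rfl⟩)

lemma card_quot_le [Finite α] {π σ : Setoid α} (h : π ≤ σ) :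
    Nat.card (Quotient σ) ≤ Nat.card (Quotient π) :=
  Nat.card_le_card_of_surjective (qmap h) (qmap_surjective h)

lemma card_quot_le_card [Finite α] (π : Setoid α) : Nat.card (Quotient π) ≤ Nat.card α :=
  Nat.card_le_card_of_surjective (Quotient.mk'' : α → Quotient π)
    (fun q => Quotient.inductionOn' q (fun a => ⟨a, rfl⟩))

lemma card_quot_bot [Finite α] : Nat.card (Quotient (⊥ : Setoid α)) = Nat.card α := by
  have hbij : Function.Bijective (Quotient.mk'' : α → Quotient ⊥) := by
    constructor
    · intro a b hab
      have h2 : ⇑(⊥ : Setoid α) a b := Quotient.eq''.1 hab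
      rwa [Setoid.bot_def] at h2
    · exact fun q => Quotient.inductionOn' q (fun a => ⟨a, rfl⟩)
  exact (Nat.card_congr (Equiv.ofBijective _ hbij)).symm

lemma card_quot_covby [Finite α] {π ρ : Setoid α} (h : π ⋖ ρ) :
    Nat.card (Quotient π) = Nat.card (Quotient ρ) + 1 := by
  obtain ⟨x0, y0, hn, hmerge⟩ := covBy_eq_mergeS h
  have hle : π ≤ ρ := h.1.le
  letI : Fintype (Quotient π) := Fintype.ofFinite _
  letI : Fintype (Quotient ρ) := Fintype.ofFinite _
  rw [Nat.card_eq_fintype_card, Nat.card_eq_fintype_card]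
  set G := qmap hle with hG
  set Y : Quotient π := Quotient.mk'' y0 with hY
  have hrel_x0y0 : ρ x0 y0 := by rw [hmerge]; exact mergeS_self π x0 y0
  have hXY : (Quotient.mk'' x0 : Quotient π) ≠ Y := by
    rw [hY, Ne, Quotient.eq'']; exact hn
  have himg : (Finset.univ.erase Y).image G = Finset.univ := by
    apply Finset.eq_univ_of_forall
    intro c
    rw [Finset.mem_image]
    refine Quotient.inductionOn' c (fun z => ?_)
    by_cases hz : (Quotient.mk'' z : Quotient π) = Y
    · refine ⟨Quotient.mk'' x0, Finset.mem_erase.2 ⟨hXY, Finset.mem_univ _⟩, ?_⟩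
      rw [hG, qmap_mk, Quotient.eq'']
      have hzy : π z y0 := by rw [hY] at hz; exact Quotient.eq''.1 hz
      exact ρ.trans' hrel_x0y0 (ρ.symm' (hle hzy))
    · exact ⟨Quotient.mk'' z, Finset.mem_erase.2 ⟨hz, Finset.mem_univ _⟩, rfl⟩
  have hinj : Set.InjOn G (Finset.univ.erase Y) := by
    intro q1 hq1 q2 hq2 heq
    revert hq1 hq2 heq
    refine Quotient.inductionOn₂' q1 q2 (fun a b => ?_)
    intro hq1 hq2 heq
    have hmem1 := Finset.mem_coe.1 hq1
    have hmem2 := Finset.mem_coe.1 hq2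
    rw [Finset.mem_erase] at hmem1 hmem2
    have hab : ρ a b := by
      rw [hG] at heq
      rw [qmap_mk, qmap_mk] at heq
      exact Quotient.eq''.1 heq
    rw [hmerge, mergeS_rel] at hab
    rcases hab with hab | ⟨_, h2⟩ | ⟨h1, _⟩
    · exact Quotient.sound' hab
    · exact absurd (by rw [hY, Quotient.eq'']; exact π.symm' h2) hmem2.1
    · exact absurd (by rw [hY, Quotient.eq'']; exact h1) hmem1.1
  have hYuniv : Y ∈ (Finset.univ : Finset (Quotient π)) := Finset.mem_univ _
  have h1 : Fintype.card (Quotient ρ) = (Finset.univ.erase Y).card := by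
    rw [← Finset.card_univ, ← himg, Finset.card_image_of_injOn hinj]
  rw [h1, Finset.card_erase_of_mem hYuniv, Finset.card_univ]
  have : 0 < Fintype.card (Quotient π) := Fintype.card_pos_iff.2 ⟨Y⟩
  omega


/-- The central counting lemma: if `σ` coarsens `π` by merging at most `T` times,
then `m` pairwise `π`-inequivalent, `π`-nontrivial, `σ`-trivial pairs force
`2 * m ≤ T * (T + 1)`. -/
lemma countS [Finite α] (π σ : Setoid α) (hle : π ≤ σ) (T : ℕ)
    (hcard : Nat.card (Quotient π) ≤ Nat.card (Quotient σ) + T)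
    (m : ℕ) (x y : Fin m → α)
    (hrel : ∀ i, σ (x i) (y i)) (hnrel : ∀ i, ¬ π (x i) (y i))
    (hdist : ∀ i j, i ≠ j →
      ¬ ((π (x i) (x j) ∧ π (y i) (y j)) ∨ (π (x i) (y j) ∧ π (y i) (x j)))) :
    2 * m ≤ T * (T + 1) := by
  letI : Fintype (Quotient π) := Fintype.ofFinite _
  letI : Fintype (Quotient σ) := Fintype.ofFinite _
  rw [Nat.card_eq_fintype_card, Nat.card_eq_fintype_card] at hcard
  set g := qmap hle with hg
  set fib : Quotient σ → Finset (Quotient π) :=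
    fun c => Finset.univ.filter (fun q => g q = c) with hfib
  -- sum of fiber cards
  have sum1 : ∑ c : Quotient σ, (fib c).card = Fintype.card (Quotient π) := by
    rw [← Finset.card_univ]
    exact (Finset.card_eq_sum_card_fiberwise (fun q _ => Finset.mem_univ (g q))).symm
  have fibpos : ∀ c, 1 ≤ (fib c).card := by
    intro c
    obtain ⟨q, hq⟩ := qmap_surjective hle c
    refine Finset.card_pos.2 ⟨q, ?_⟩
    rw [hfib]; exact Finset.mem_filter.2 ⟨Finset.mem_univ _, hq⟩
  have sum2 : ∑ c : Quotient σ, ((fib c).card - 1) + Fintype.card (Quotient σ) =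
      Fintype.card (Quotient π) := by
    rw [← sum1, ← Finset.card_univ (α := Quotient σ), Finset.card_eq_sum_ones,
      ← Finset.sum_add_distrib]
    refine Finset.sum_congr rfl (fun c _ => ?_)
    have := fibpos c
    omega
  have hT : ∑ c : Quotient σ, ((fib c).card - 1) ≤ T := by omega
  -- the big off-diagonal set
  set DD : Finset (Quotient π × Quotient π) :=
    Finset.univ.filter (fun p => p.1 ≠ p.2 ∧ g p.1 = g p.2) with hDD
  have hDDcard : DD.card = ∑ c : Quotient σ, ((fib c).card * (fib c).card - (fib c).card) := by
    rw [Finset.card_eq_sum_card_fiberwise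
      (f := fun p : Quotient π × Quotient π => g p.1)
      (t := Finset.univ) (fun p _ => Finset.mem_univ _)]
    refine Finset.sum_congr rfl (fun c _ => ?_)
    rw [← Finset.offDiag_card]
    congr 1
    ext p
    rw [Finset.mem_filter, Finset.mem_offDiag, hDD, Finset.mem_filter, hfib,
      Finset.mem_filter, Finset.mem_filter]
    constructor
    · rintro ⟨⟨-, hne, hgeq⟩, hc⟩
      exact ⟨⟨Finset.mem_univ _, hc⟩, ⟨Finset.mem_univ _, hgeq ▸ hc⟩, hne⟩
    · rintro ⟨⟨-, h1⟩, ⟨-, h2⟩, hne⟩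
      exact ⟨⟨Finset.mem_univ _, hne, h1.trans h2.symm⟩, h1⟩
  have hDDbound : DD.card ≤ T * (T + 1) := by
    rw [hDDcard]
    calc ∑ c : Quotient σ, ((fib c).card * (fib c).card - (fib c).card)
        ≤ ∑ c : Quotient σ, (T + 1) * ((fib c).card - 1) := by
          refine Finset.sum_le_sum (fun c _ => ?_)
          have h1 := fibpos c
          have h2 : (fib c).card - 1 ≤ T := by
            refine le_trans ?_ hT
            exact Finset.single_le_sum (f := fun c => (fib c).card - 1)
              (fun _ _ => Nat.zero_le _) (Finset.mem_univ c)
          obtain ⟨k, hk⟩ := Nat.exists_eq_add_of_le h1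
          rw [hk]
          have e2 : 1 + k - 1 = k := by omega
          rw [e2, Nat.mul_add, Nat.mul_one]
          have hkT : k ≤ T := by omega
          have : (1 + k) * k ≤ (T + 1) * k := Nat.mul_le_mul (by omega) (le_refl _)
          omega
      _ = (T + 1) * ∑ c : Quotient σ, ((fib c).card - 1) := by rw [Finset.mul_sum]
      _ ≤ (T + 1) * T := Nat.mul_le_mul_left _ hT
      _ = T * (T + 1) := Nat.mul_comm _ _
  -- inject the 2m ordered pairs into DD
  have e'' : ∀ {a b : α}, ((Quotient.mk'' a : Quotient π) = Quotient.mk'' b) ↔ π a b :=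
    fun {a b} => Quotient.eq''
  set F1 : Fin m → Quotient π × Quotient π :=
    fun i => (Quotient.mk'' (x i), Quotient.mk'' (y i)) with hF1
  set F2 : Fin m → Quotient π × Quotient π :=
    fun i => (Quotient.mk'' (y i), Quotient.mk'' (x i)) with hF2
  have hgxy : ∀ i, g (Quotient.mk'' (x i) : Quotient π) = g (Quotient.mk'' (y i)) := by
    intro i
    rw [hg, qmap_mk, qmap_mk]
    exact Quotient.sound' (hrel i)
  have hmk : ∀ i, (Quotient.mk'' (x i) : Quotient π) ≠ Quotient.mk'' (y i) := by
    intro i h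
    exact hnrel i (e''.1 h)
  have hmem1 : ∀ i, F1 i ∈ DD := fun i =>
    Finset.mem_filter.2 ⟨Finset.mem_univ _, hmk i, hgxy i⟩
  have hmem2 : ∀ i, F2 i ∈ DD := fun i =>
    Finset.mem_filter.2 ⟨Finset.mem_univ _, (hmk i).symm, (hgxy i).symm⟩
  have hi1 : Set.InjOn F1 ↑(Finset.univ : Finset (Fin m)) := by
    intro i _ j _ h
    by_contra hij
    exact hdist i j hij (Or.inl ⟨e''.1 (congrArg Prod.fst h), e''.1 (congrArg Prod.snd h)⟩)
  have hi2 : Set.InjOn F2 ↑(Finset.univ : Finset (Fin m)) := by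
    intro i _ j _ h
    by_contra hij
    exact hdist i j hij (Or.inl ⟨e''.1 (congrArg Prod.snd h), e''.1 (congrArg Prod.fst h)⟩)
  have hdisj : Disjoint (Finset.univ.image F1) (Finset.univ.image F2) := by
    rw [Finset.disjoint_left]
    intro p hp1 hp2
    obtain ⟨i, -, hi⟩ := Finset.mem_image.1 hp1
    obtain ⟨j, -, hj⟩ := Finset.mem_image.1 hp2
    have h := hi.trans hj.symm
    have h1 : π (x i) (y j) := e''.1 (congrArg Prod.fst h)
    have h2 : π (y i) (x j) := e''.1 (congrArg Prod.snd h)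
    by_cases hij : i = j
    · subst hij; exact hnrel i h1
    · exact hdist i j hij (Or.inr ⟨h1, h2⟩)
  have hsub : Finset.univ.image F1 ∪ Finset.univ.image F2 ⊆ DD := by
    intro p hp
    rcases Finset.mem_union.1 hp with hp | hp
    · obtain ⟨i, -, hi⟩ := Finset.mem_image.1 hp
      exact hi ▸ hmem1 i
    · obtain ⟨i, -, hi⟩ := Finset.mem_image.1 hp
      exact hi ▸ hmem2 i
  have h2m : 2 * m ≤ DD.card := by
    have hcardu : (Finset.univ.image F1 ∪ Finset.univ.image F2).card = 2 * m := by
      rw [Finset.card_union_of_disjoint hdisj, Finset.card_image_of_injOn hi1,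
        Finset.card_image_of_injOn hi2, Finset.card_univ, Fintype.card_fin]
      omega
    calc 2 * m = (Finset.univ.image F1 ∪ Finset.univ.image F2).card := hcardu.symm
      _ ≤ DD.card := Finset.card_le_card hsub
  exact le_trans h2m hDDbound


section LatticeSide

set_option linter.unusedSectionVars false

variable {L : Type} [Lattice L] [BoundedOrder L] [Fintype L] [IsModularLattice L]
  {n : ℕ} (f : L → Setoid (Fin n))

/-- Number of classes of the image partition. -/
def Dh (f : L → Setoid (Fin n)) (x : L) : ℕ := Nat.card (Quotient (f x))

omit [BoundedOrder L] [Fintype L] [IsModularLattice L] in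
lemma dichot {u x w : L} (hcx : u ⋖ x) (h1 : u ≤ w) (h2 : w ≤ x) : w = u ∨ w = x := by
  rcases h1.lt_or_eq with h1' | h1'
  · rcases h2.lt_or_eq with h2' | h2'
    · exact absurd h2' (hcx.2 h1')
    · exact Or.inr h2'
  · exact Or.inl h1'.symm



variable (hf : IsTightEmbedding f)
include hf

lemma fmono : ∀ {x y : L}, x ≤ y → f x ≤ f y := by
  intro x y h
  have h1 : f (x ⊓ y) = f x ⊓ f y := hf.2.1 x y
  rw [inf_eq_left.2 h] at h1
  exact h1.le.trans inf_le_right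

omit hf in
lemma Dh_le_n (x : L) : Dh f x ≤ n := by
  have h := card_quot_le_card (f x)
  have h2 : Nat.card (Fin n) = n := by rw [Nat.card_eq_fintype_card, Fintype.card_fin]
  unfold Dh
  omega

lemma Dh_covBy {x y : L} (h : x ⋖ y) : Dh f x = Dh f y + 1 :=
  card_quot_covby (hf.2.2.2 x y h)

omit hf in
lemma exists_covBy' {x y : L} (h : x < y) : ∃ z, x ⋖ z ∧ z ≤ y := by
  have hne : (Finset.univ.filter (fun w => x < w ∧ w ≤ y)).Nonempty :=
    ⟨y, Finset.mem_filter.2 ⟨Finset.mem_univ _, h, le_refl y⟩⟩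
  obtain ⟨z, hzm⟩ := Finset.exists_minimal hne
  obtain ⟨hz, hmin⟩ : z ∈ _ ∧ ∀ w ∈ _, ¬ w < z := ⟨hzm.1, fun w hw => hzm.not_lt hw⟩
  rw [Finset.mem_filter] at hz
  refine ⟨z, ⟨hz.2.1, ?_⟩, hz.2.2⟩
  intro w hw1 hw2
  exact hmin w (Finset.mem_filter.2 ⟨Finset.mem_univ _, hw1, (le_of_lt hw2).trans hz.2.2⟩) hw2

lemma Dh_mono {x y : L} (h : x ≤ y) : Dh f y ≤ Dh f x :=
  card_quot_le (fmono f hf h)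

lemma Dh_strict {x y : L} (h : x < y) : Dh f y < Dh f x := by
  obtain ⟨z, hz, hzy⟩ := exists_covBy' h
  have h1 := Dh_covBy f hf hz
  have h2 := Dh_mono f hf hzy
  omega

lemma eq_of_le_Dh {x y : L} (h : x ≤ y) (hD : Dh f x ≤ Dh f y) : x = y := by
  rcases h.lt_or_eq with h' | h'
  · exact absurd (Dh_strict f hf h') (by omega)
  · exact h'

lemma finj : Function.Injective f := by
  intro x y h
  have h1 : f (x ⊓ y) = f x := by rw [hf.2.1 x y, h, inf_idem]
  have h3 : Dh f (x ⊓ y) = Dh f x := by unfold Dh; rw [h1]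
  have h4 : x ⊓ y = x := eq_of_le_Dh f hf inf_le_left (by omega)
  have h1' : f (x ⊓ y) = f y := by rw [hf.2.1 x y, h, inf_idem]
  have h3' : Dh f (x ⊓ y) = Dh f y := by unfold Dh; rw [h1']
  have h4' : x ⊓ y = y := eq_of_le_Dh f hf inf_le_right (by omega)
  rw [← h4, h4']

lemma covBy_of_Dh {x y : L} (h : x ≤ y) (hD : Dh f x = Dh f y + 1) : x ⋖ y := by
  constructor
  · rcases h.lt_or_eq with h' | h'
    · exact h'
    · exfalso; rw [h'] at hD; omega
  · intro w hw1 hw2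
    have := Dh_strict f hf hw1
    have := Dh_strict f hf hw2
    omega

/-- The modular equality for the class-counting function. -/
lemma Dh_modular (x y : L) : Dh f x + Dh f y = Dh f (x ⊔ y) + Dh f (x ⊓ y) := by
  suffices H : ∀ N, ∀ x y : L, Dh f (x ⊓ y) ≤ N →
      Dh f x + Dh f y = Dh f (x ⊔ y) + Dh f (x ⊓ y) from H (Dh f (x ⊓ y)) x y (le_refl _)
  intro N
  induction N with
  | zero =>
    intro x y hN
    have h1 : Dh f x ≤ 0 := le_trans (Dh_mono f hf inf_le_left) hN
    have h2 : Dh f y ≤ 0 := le_trans (Dh_mono f hf inf_le_right) hN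
    have h3 : Dh f (x ⊔ y) ≤ 0 := le_trans (Dh_mono f hf le_sup_left) h1
    omega
  | succ N IH =>
    intro x y hN
    by_cases hxy : x ⊓ y = x
    · have hle : x ≤ y := inf_eq_left.1 hxy
      rw [sup_eq_right.2 hle, hxy]
      omega
    · have hlt : x ⊓ y < x := lt_of_le_of_ne inf_le_left hxy
      obtain ⟨z, hcov, hzx⟩ := exists_covBy' hlt
      have hcovD := Dh_covBy f hf hcov
      -- y ⋖ z ⊔ y
      have hcov2 : y ⋖ z ⊔ y := by
        constructor
        · rcases (le_sup_right : y ≤ z ⊔ y).lt_or_eq with h' | h'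
          · exact h'
          · exfalso
            have hzy2 : z ≤ y := le_sup_left.trans h'.ge
            exact absurd (lt_of_le_of_lt (le_inf hzx hzy2) hcov.1) (lt_irrefl z)
        · intro w hw1 hw2
          have hyw : y ≤ w := hw1.le
          have hmod : (y ⊔ z) ⊓ w = y ⊔ (z ⊓ w) := sup_inf_assoc_of_le z hyw
          have hwle : w ≤ y ⊔ z := by rw [sup_comm]; exact hw2.le
          have hw_eq : w = y ⊔ (z ⊓ w) := by rw [← hmod]; exact (inf_eq_right.2 hwle).symm
          have hb1 : x ⊓ y ≤ z ⊓ w := le_inf hcov.1.le (inf_le_right.trans hyw)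
          rcases lt_or_eq_of_le hb1 with hlt2 | he
          · have hzz : z ⊓ w = z := by
              rcases lt_or_eq_of_le (inf_le_left : z ⊓ w ≤ z) with h'' | h''
              · exact absurd h'' (hcov.2 hlt2)
              · exact h''
            have hzw : z ≤ w := hzz ▸ inf_le_right
            exact absurd hw2 (sup_le hzw hyw).not_gt
          · rw [← he] at hw_eq
            have : w = y := by rw [hw_eq, sup_eq_left.2 (inf_le_right : x ⊓ y ≤ y)]
            exact absurd this hw1.ne'
      have hcov2D := Dh_covBy f hf hcov2
      have hmeet : x ⊓ (z ⊔ y) = z := by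
        rw [inf_comm, sup_inf_assoc_of_le y hzx, inf_comm (a := y)]
        exact sup_eq_left.2 hcov.1.le
      have hjoin : x ⊔ (z ⊔ y) = x ⊔ y := by rw [← sup_assoc, sup_eq_left.2 hzx]
      have IH2 := IH x (z ⊔ y) (by rw [hmeet]; omega)
      rw [hmeet, hjoin] at IH2
      omega

lemma Dh_bot : Dh f (⊥ : L) = n := by
  unfold Dh
  rw [hf.2.2.1]
  have h := card_quot_bot (α := Fin n)
  rwa [Nat.card_eq_fintype_card (α := Fin n), Fintype.card_fin] at h

/-- Core step: under a failure of the 2-distributive inequality, the element `b`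
covers `u`. -/
lemma coverstep (k M : ℕ)
    (IHk : ∀ u v a b c d : L, u ≤ v → Dh f u ≤ Dh f v + k →
      u ≤ a → a ≤ v → u ≤ b → b ≤ v → u ≤ c → c ≤ v → u ≤ d → d ≤ v →
      a ⊓ (b ⊔ c ⊔ d) ≤ a ⊓ (b ⊔ c) ⊔ a ⊓ (b ⊔ d) ⊔ a ⊓ (c ⊔ d))
    (IHM : ∀ u v a b c d : L, 3 * n ≤ Dh f b + Dh f c + Dh f d + M →
      u ≤ v → Dh f u ≤ Dh f v + (k + 1) →
      u ≤ a → a ≤ v → u ≤ b → b ≤ v → u ≤ c → c ≤ v → u ≤ d → d ≤ v →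
      a ⊓ (b ⊔ c ⊔ d) ≤ a ⊓ (b ⊔ c) ⊔ a ⊓ (b ⊔ d) ⊔ a ⊓ (c ⊔ d))
    (u v A b c d : L) (hμ : 3 * n ≤ Dh f b + Dh f c + Dh f d + (M + 1))
    (huv : u ≤ v) (hgap : Dh f u ≤ Dh f v + (k + 1))
    (huA : u ≤ A) (hAv : A ≤ v) (hub : u ≤ b) (hbv : b ≤ v)
    (huc : u ≤ c) (hcv : c ≤ v) (hud : u ≤ d) (hdv : d ≤ v)
    (hAbcd : A ≤ b ⊔ c ⊔ d)
    (hfail : ¬ A ≤ A ⊓ (b ⊔ c) ⊔ A ⊓ (b ⊔ d) ⊔ A ⊓ (c ⊔ d)) : u ⋖ b := by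
  set R := A ⊓ (b ⊔ c) ⊔ A ⊓ (b ⊔ d) ⊔ A ⊓ (c ⊔ d) with hR
  have hRA : R ≤ A := sup_le (sup_le inf_le_left inf_le_left) inf_le_left
  have ht1R : A ⊓ (b ⊔ c) ≤ R := le_sup_left.trans le_sup_left
  have ht2R : A ⊓ (b ⊔ d) ≤ R := le_sup_right.trans le_sup_left
  have ht3R : A ⊓ (c ⊔ d) ≤ R := le_sup_right
  -- u < b
  have hub_lt : u < b := by
    rcases hub.lt_or_eq with h | h
    · exact h
    · exfalso
      apply hfail
      have : b ⊔ c ⊔ d = c ⊔ d := by rw [← h, sup_eq_right.2 huc]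
      rw [this] at hAbcd
      exact (inf_eq_left.2 hAbcd).symm.le.trans ht3R
  constructor
  · exact hub_lt
  · intro b' hub' hb'b
    -- the interval [b', v] argument
    have hb'b_le : b' ≤ b := hb'b.le
    have hb'v : b' ≤ v := hb'b_le.trans hbv
    have law1 := IHk b' v (A ⊔ b') b (c ⊔ b') (d ⊔ b') hb'v
      (by have := Dh_strict f hf hub'; omega)
      le_sup_right (sup_le hAv hb'v) hb'b_le hbv le_sup_right (sup_le hcv hb'v)
      le_sup_right (sup_le hdv hb'v)
    have j1 : b ⊔ (c ⊔ b') = b ⊔ c := by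
      rw [sup_comm c b', ← sup_assoc, sup_eq_left.2 hb'b_le]
    have j2 : b ⊔ (d ⊔ b') = b ⊔ d := by
      rw [sup_comm d b', ← sup_assoc, sup_eq_left.2 hb'b_le]
    have j3 : (c ⊔ b') ⊔ (d ⊔ b') = (c ⊔ d) ⊔ b' := by
      rw [sup_sup_sup_comm, sup_idem]
    have j0 : b ⊔ (c ⊔ b') ⊔ (d ⊔ b') = b ⊔ c ⊔ d := by
      rw [j1, sup_assoc, sup_comm d b', ← sup_assoc, ← sup_assoc, sup_assoc b c b',
        sup_comm c b', ← sup_assoc, sup_eq_left.2 hb'b_le, sup_assoc]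
    rw [j0, j1, j2, j3] at law1
    have lhs1 : (A ⊔ b') ⊓ (b ⊔ c ⊔ d) = A ⊔ b' :=
      inf_eq_left.2 (sup_le hAbcd (hb'b_le.trans (le_sup_left.trans le_sup_left)))
    rw [lhs1] at law1
    have t1 : (A ⊔ b') ⊓ (b ⊔ c) = b' ⊔ (A ⊓ (b ⊔ c)) := by
      rw [sup_comm A b']
      exact sup_inf_assoc_of_le A (hb'b_le.trans le_sup_left)
    have t2 : (A ⊔ b') ⊓ (b ⊔ d) = b' ⊔ (A ⊓ (b ⊔ d)) := by
      rw [sup_comm A b']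
      exact sup_inf_assoc_of_le A (hb'b_le.trans le_sup_left)
    have t3 : (A ⊔ b') ⊓ ((c ⊔ d) ⊔ b') = b' ⊔ (A ⊓ (c ⊔ d ⊔ b')) := by
      rw [sup_comm A b']
      exact sup_inf_assoc_of_le A le_sup_right
    rw [t1, t2, t3] at law1
    -- the inner induction hypothesis on the triple (c, d, b')
    have law2 := IHM u v A c d b'
      (by have := Dh_strict f hf hb'b; omega)
      huv hgap huA hAv huc hcv hud hdv hub'.le hb'v
    have law2' : A ⊓ (c ⊔ d ⊔ b') ≤ R := by
      refine le_trans law2 (sup_le (sup_le ht3R ?_) ?_)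
      · exact le_trans (inf_le_inf_left A (sup_le le_sup_right (hb'b_le.trans le_sup_left))) ht1R
      · exact le_trans (inf_le_inf_left A (sup_le le_sup_right (hb'b_le.trans le_sup_left))) ht2R
    have hstep : A ⊔ b' ≤ R ⊔ b' := by
      refine le_trans law1 (sup_le (sup_le ?_ ?_) ?_)
      · exact sup_le le_sup_right (ht1R.trans le_sup_left)
      · exact sup_le le_sup_right (ht2R.trans le_sup_left)
      · exact sup_le le_sup_right (law2'.trans le_sup_left)
    have hA_le : A ≤ R ⊔ b' := le_sup_left.trans hstep
    have hmodf : (R ⊔ b') ⊓ A = R ⊔ (b' ⊓ A) := sup_inf_assoc_of_le b' hRA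
    have hAeq : A = R ⊔ (b' ⊓ A) := by
      rw [← hmodf]; exact (inf_eq_right.2 hA_le).symm
    have hb'A : b' ⊓ A ≤ R := by
      refine le_trans ?_ ht1R
      exact le_inf inf_le_right ((inf_le_left.trans hb'b_le).trans le_sup_left)
    exact hfail (hAeq.le.trans (sup_le le_rfl hb'A))


lemma countL (u V : L) (T m : ℕ) (hUV : u ≤ V) (hD : Dh f u ≤ Dh f V + T)
    (p : Fin m → L) (hcov : ∀ i, u ⋖ p i) (hle : ∀ i, p i ≤ V)
    (hne : ∀ i j, i ≠ j → p i ≠ p j) : 2 * m ≤ T * (T + 1) := by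
  have hcovS : ∀ i, f u ⋖ f (p i) := fun i => hf.2.2.2 _ _ (hcov i)
  choose x y hnrel hmerge using fun i => covBy_eq_mergeS (hcovS i)
  refine countS (f u) (f V) (fmono f hf hUV) T hD m x y ?_ hnrel ?_
  · intro i
    have h1 : f (p i) ≤ f V := fmono f hf (hle i)
    exact h1 (by rw [hmerge i]; exact mergeS_self _ _ _)
  · intro i j hij h
    refine hne i j hij (finj f hf ?_)
    rw [hmerge i, hmerge j]
    rcases h with ⟨h1, h2⟩ | ⟨h1, h2⟩
    · exact mergeS_congr h1 h2
    · exact (mergeS_congr h1 h2).trans (mergeS_comm _ _ _)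

lemma count7 (u V : L) (hUV : u ≤ V) (hD : Dh f u ≤ Dh f V + 3)
    (p1 p2 p3 p4 p5 p6 p7 : L)
    (hc1 : u ⋖ p1) (hc2 : u ⋖ p2) (hc3 : u ⋖ p3) (hc4 : u ⋖ p4)
    (hc5 : u ⋖ p5) (hc6 : u ⋖ p6) (hc7 : u ⋖ p7)
    (hl1 : p1 ≤ V) (hl2 : p2 ≤ V) (hl3 : p3 ≤ V) (hl4 : p4 ≤ V)
    (hl5 : p5 ≤ V) (hl6 : p6 ≤ V) (hl7 : p7 ≤ V)
    (h12 : p1 ≠ p2) (h13 : p1 ≠ p3) (h14 : p1 ≠ p4) (h15 : p1 ≠ p5)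
    (h16 : p1 ≠ p6) (h17 : p1 ≠ p7)
    (h23 : p2 ≠ p3) (h24 : p2 ≠ p4) (h25 : p2 ≠ p5) (h26 : p2 ≠ p6) (h27 : p2 ≠ p7)
    (h34 : p3 ≠ p4) (h35 : p3 ≠ p5) (h36 : p3 ≠ p6) (h37 : p3 ≠ p7)
    (h45 : p4 ≠ p5) (h46 : p4 ≠ p6) (h47 : p4 ≠ p7)
    (h56 : p5 ≠ p6) (h57 : p5 ≠ p7) (h67 : p6 ≠ p7) : False := by
  have h := countL f hf u V 3 7 hUV hD
    (fun i => match i with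
      | 0 => p1 | 1 => p2 | 2 => p3 | 3 => p4 | 4 => p5 | 5 => p6 | 6 => p7)
    (by intro i; fin_cases i <;> exact_mod_cast (by assumption : u ⋖ _))
    (by intro i; fin_cases i <;> assumption)
    (by
      intro i j hij
      fin_cases i <;> fin_cases j <;>
        first
          | exact absurd rfl hij
          | exact h12 | exact h12.symm | exact h13 | exact h13.symm
          | exact h14 | exact h14.symm | exact h15 | exact h15.symm
          | exact h16 | exact h16.symm | exact h17 | exact h17.symm
          | exact h23 | exact h23.symm | exact h24 | exact h24.symm
          | exact h25 | exact h25.symm | exact h26 | exact h26.symm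
          | exact h27 | exact h27.symm | exact h34 | exact h34.symm
          | exact h35 | exact h35.symm | exact h36 | exact h36.symm
          | exact h37 | exact h37.symm | exact h45 | exact h45.symm
          | exact h46 | exact h46.symm | exact h47 | exact h47.symm
          | exact h56 | exact h56.symm | exact h57 | exact h57.symm
          | exact h67 | exact h67.symm)
  omega

/-- The main inductive lemma: the 2-distributive inequality on every interval. -/
lemma key : ∀ (k : ℕ) (u v a b c d : L), u ≤ v → Dh f u ≤ Dh f v + k →
    u ≤ a → a ≤ v → u ≤ b → b ≤ v → u ≤ c → c ≤ v → u ≤ d → d ≤ v →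
    a ⊓ (b ⊔ c ⊔ d) ≤ a ⊓ (b ⊔ c) ⊔ a ⊓ (b ⊔ d) ⊔ a ⊓ (c ⊔ d) := by
  intro k
  induction k with
  | zero =>
    intro u v a b c d huv hgap hua hav hub hbv huc hcv hud hdv
    have huv' : u = v := eq_of_le_Dh f hf huv (by have := Dh_mono f hf huv; omega)
    subst huv'
    have ha : a = u := le_antisymm hav hua
    have hb : b = u := le_antisymm hbv hub
    have hc : c = u := le_antisymm hcv huc
    have hd : d = u := le_antisymm hdv hud
    subst ha; subst hb; subst hc; subst hd
    simp
  | succ k IHk =>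
    have INNER : ∀ (M : ℕ) (u v a b c d : L), 3 * n ≤ Dh f b + Dh f c + Dh f d + M →
        u ≤ v → Dh f u ≤ Dh f v + (k + 1) →
        u ≤ a → a ≤ v → u ≤ b → b ≤ v → u ≤ c → c ≤ v → u ≤ d → d ≤ v →
        a ⊓ (b ⊔ c ⊔ d) ≤ a ⊓ (b ⊔ c) ⊔ a ⊓ (b ⊔ d) ⊔ a ⊓ (c ⊔ d) := by
      intro M
      induction M with
      | zero =>
        intro u v a b c d hμ huv hgap hua hav hub hbv huc hcv hud hdv
        have e1 := Dh_le_n f b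
        have e2 := Dh_le_n f c
        have e3 := Dh_le_n f d
        have hbb : (⊥ : L) = b := eq_of_le_Dh f hf bot_le (by rw [Dh_bot f hf]; omega)
        have hcc : (⊥ : L) = c := eq_of_le_Dh f hf bot_le (by rw [Dh_bot f hf]; omega)
        have hdd : (⊥ : L) = d := eq_of_le_Dh f hf bot_le (by rw [Dh_bot f hf]; omega)
        rw [← hbb, ← hcc, ← hdd]
        simp
      | succ M IHM =>
        intro u v a b c d hμ huv hgap hua hav hub hbv huc hcv hud hdv
        by_contra hfail0
        set A := a ⊓ (b ⊔ c ⊔ d) with hAdef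
        have hAa : A ≤ a := inf_le_left
        have hAbcd : A ≤ b ⊔ c ⊔ d := inf_le_right
        have hbV : b ≤ b ⊔ c ⊔ d := le_sup_left.trans le_sup_left
        have hcV : c ≤ b ⊔ c ⊔ d := le_sup_right.trans le_sup_left
        have hdV : d ≤ b ⊔ c ⊔ d := le_sup_right
        have hterm : ∀ p : L, p ≤ b ⊔ c ⊔ d → A ⊓ p = a ⊓ p := by
          intro p hp
          rw [hAdef, inf_assoc, inf_eq_right.2 hp]
        set R := A ⊓ (b ⊔ c) ⊔ A ⊓ (b ⊔ d) ⊔ A ⊓ (c ⊔ d) with hRdef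
        have ht1R : A ⊓ (b ⊔ c) ≤ R := le_sup_left.trans le_sup_left
        have ht2R : A ⊓ (b ⊔ d) ≤ R := le_sup_right.trans le_sup_left
        have ht3R : A ⊓ (c ⊔ d) ≤ R := le_sup_right
        have hRA : R ≤ A := sup_le (sup_le inf_le_left inf_le_left) inf_le_left
        have hfail : ¬ A ≤ R := by
          intro hcon
          apply hfail0
          calc a ⊓ (b ⊔ c ⊔ d) ≤ R := hcon
            _ = a ⊓ (b ⊔ c) ⊔ a ⊓ (b ⊔ d) ⊔ a ⊓ (c ⊔ d) := by
                rw [hRdef, hterm _ (sup_le hbV hcV), hterm _ (sup_le hbV hdV),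
                  hterm _ (sup_le hcV hdV)]
        have huA : u ≤ A := le_inf hua (hub.trans hbV)
        have hAv : A ≤ v := hAa.trans hav
        -- the three covers
        have hcb : u ⋖ b :=
          coverstep f hf k M IHk IHM u v A b c d hμ huv hgap huA hAv hub hbv huc hcv
            hud hdv hAbcd hfail
        have hcc : u ⋖ c := by
          refine coverstep f hf k M IHk IHM u v A c b d (by omega) huv hgap huA hAv huc hcv
            hub hbv hud hdv ?_ ?_
          · rwa [sup_comm c b]
          · intro hcon
            apply hfail
            refine le_trans hcon ?_
            rw [sup_comm c b, sup_right_comm]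
        have hcd : u ⋖ d := by
          refine coverstep f hf k M IHk IHM u v A d b c (by omega) huv hgap huA hAv hud hdv
            hub hbv huc hcv ?_ ?_
          · rwa [sup_comm d b, sup_right_comm]
          · intro hcon
            apply hfail
            refine le_trans hcon ?_
            rw [sup_comm d b, sup_comm d c]
            exact le_of_eq (by rw [hRdef]; ac_rfl)
        -- cover heights
        have db := Dh_covBy f hf hcb
        have dc := Dh_covBy f hf hcc
        have dd := Dh_covBy f hf hcd
        -- non-containments of A in the pairwise joins
        have hnbc : ¬ A ≤ b ⊔ c := fun h => hfail ((inf_eq_left.2 h).symm.le.trans ht1R)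
        have hnbd : ¬ A ≤ b ⊔ d := fun h => hfail ((inf_eq_left.2 h).symm.le.trans ht2R)
        have hncd : ¬ A ≤ c ⊔ d := fun h => hfail ((inf_eq_left.2 h).symm.le.trans ht3R)
        -- pairwise meets of b, c, d are u
        have hbc_u : b ⊓ c = u := by
          rcases dichot hcb (le_inf hub huc) inf_le_left with h | h
          · exact h
          · exfalso
            have h2 : b ⊔ c = c := sup_eq_right.2 (inf_eq_left.1 h)
            have h3 := hAbcd
            rw [h2] at h3
            exact hncd h3
        have hbd_u : b ⊓ d = u := by
          rcases dichot hcb (le_inf hub hud) inf_le_left with h | h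
          · exact h
          · exfalso
            have h2 : b ⊔ d = d := sup_eq_right.2 (inf_eq_left.1 h)
            have h3 := hAbcd
            rw [sup_right_comm, h2, sup_comm d c] at h3
            exact hncd h3
        have hcd_u : c ⊓ d = u := by
          rcases dichot hcc (le_inf huc hud) inf_le_left with h | h
          · exact h
          · exfalso
            have h2 : c ⊔ d = d := sup_eq_right.2 (inf_eq_left.1 h)
            have h3 := hAbcd
            rw [sup_assoc, h2] at h3
            exact hnbd h3
        -- heights of pairwise joins
        have dbc : Dh f (b ⊔ c) + 2 = Dh f u := by
          have h := Dh_modular f hf b c; rw [hbc_u] at h; omega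
        have dbd : Dh f (b ⊔ d) + 2 = Dh f u := by
          have h := Dh_modular f hf b d; rw [hbd_u] at h; omega
        have dcd : Dh f (c ⊔ d) + 2 = Dh f u := by
          have h := Dh_modular f hf c d; rw [hcd_u] at h; omega
        -- height of the total join
        have hd_bc : (b ⊔ c) ⊓ d = u := by
          rcases dichot hcd (le_inf (hub.trans le_sup_left) hud) inf_le_right with h | h
          · exact h
          · exfalso
            have h2 : b ⊔ c ⊔ d = b ⊔ c := sup_eq_left.2 (inf_eq_right.1 h)
            exact hnbc (h2 ▸ hAbcd)
        have dV : Dh f (b ⊔ c ⊔ d) + 3 = Dh f u := by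
          have h := Dh_modular f hf (b ⊔ c) d; rw [hd_bc] at h; omega
        -- position of A
        have hAu_ne : u ≠ A := by
          intro h
          apply hfail
          have h2 : A ≤ b ⊔ c := h ▸ (hub.trans le_sup_left)
          exact (inf_eq_left.2 h2).symm.le.trans ht1R
        have dA_lt : Dh f A < Dh f u := Dh_strict f hf (lt_of_le_of_ne huA hAu_ne)
        have hAV_ne : A ≠ b ⊔ c ⊔ d := by
          intro h
          apply hfail
          have e1 : A ⊓ (b ⊔ c) = b ⊔ c := inf_eq_right.2 (h ▸ (le_sup_left : b ⊔ c ≤ b ⊔ c ⊔ d))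
          have e2 : A ⊓ (c ⊔ d) = c ⊔ d := inf_eq_right.2 (h ▸ (sup_le hcV hdV))
          have e3 : (b ⊔ c) ⊔ (c ⊔ d) = b ⊔ c ⊔ d := by
            rw [sup_assoc b c (c ⊔ d), ← sup_assoc c c d, sup_idem, ← sup_assoc]
          calc A = b ⊔ c ⊔ d := h
            _ = (b ⊔ c) ⊔ (c ⊔ d) := e3.symm
            _ ≤ R := sup_le (e1 ▸ ht1R) (e2 ▸ ht3R)
        have dA_gt : Dh f (b ⊔ c ⊔ d) < Dh f A :=
          Dh_strict f hf (lt_of_le_of_ne hAbcd hAV_ne)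
        have hcase : Dh f A + 2 = Dh f u ∨ Dh f A + 1 = Dh f u := by omega
        -- the join-with-A helper
        have hjA : ∀ w : L, w ≤ b ⊔ c ⊔ d → ¬ A ≤ w → Dh f w + 2 = Dh f u →
            A ⊔ w = b ⊔ c ⊔ d := by
          intro w hwV hnAw hDw
          apply eq_of_le_Dh f hf (sup_le hAbcd hwV)
          have hlt : w < A ⊔ w := by
            rcases (le_sup_right : w ≤ A ⊔ w).lt_or_eq with h | h
            · exact h
            · exact absurd (le_sup_left.trans h.ge) hnAw
          have := Dh_strict f hf hlt
          omega
        have hjAbc := hjA (b ⊔ c) (sup_le hbV hcV) hnbc dbc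
        have hjAbd := hjA (b ⊔ d) (sup_le hbV hdV) hnbd dbd
        have hjAcd := hjA (c ⊔ d) (sup_le hcV hdV) hncd dcd
        rcases hcase with hA2 | hA1
        · -- middle case is impossible
          have dx1 : Dh f (A ⊓ (b ⊔ c)) + Dh f (b ⊔ c ⊔ d) = Dh f A + Dh f (b ⊔ c) := by
            have h := Dh_modular f hf A (b ⊔ c); rw [hjAbc] at h; omega
          have dx2 : Dh f (A ⊓ (b ⊔ d)) + Dh f (b ⊔ c ⊔ d) = Dh f A + Dh f (b ⊔ d) := by
            have h := Dh_modular f hf A (b ⊔ d); rw [hjAbd] at h; omega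
          have dx3 : Dh f (A ⊓ (c ⊔ d)) + Dh f (b ⊔ c ⊔ d) = Dh f A + Dh f (c ⊔ d) := by
            have h := Dh_modular f hf A (c ⊔ d); rw [hjAcd] at h; omega
          have hRlt : R < A := lt_of_le_of_ne hRA (fun h => hfail h.ge)
          have dR_gt : Dh f A < Dh f R := Dh_strict f hf hRlt
          have dR_le : Dh f R ≤ Dh f (A ⊓ (b ⊔ c)) := Dh_mono f hf ht1R
          have hx1R : A ⊓ (b ⊔ c) = R := eq_of_le_Dh f hf ht1R (by omega)
          have dR_le2 : Dh f R ≤ Dh f (A ⊓ (b ⊔ d)) := Dh_mono f hf ht2R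
          have hx2R : A ⊓ (b ⊔ d) = R := eq_of_le_Dh f hf ht2R (by omega)
          have dR_le3 : Dh f R ≤ Dh f (A ⊓ (c ⊔ d)) := Dh_mono f hf ht3R
          have hx3R : A ⊓ (c ⊔ d) = R := eq_of_le_Dh f hf ht3R (by omega)
          have hjy : (b ⊔ c) ⊔ (b ⊔ d) = b ⊔ c ⊔ d := by
            rw [sup_sup_sup_comm, sup_idem, ← sup_assoc]
          have dy : Dh f ((b ⊔ c) ⊓ (b ⊔ d)) + Dh f (b ⊔ c ⊔ d) =
              Dh f (b ⊔ c) + Dh f (b ⊔ d) := by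
            have h := Dh_modular f hf (b ⊔ c) (b ⊔ d); rw [hjy] at h; omega
          have hyb : b = (b ⊔ c) ⊓ (b ⊔ d) :=
            eq_of_le_Dh f hf (le_inf le_sup_left le_sup_left) (by omega)
          have hjz : (b ⊔ c) ⊔ (c ⊔ d) = b ⊔ c ⊔ d := by
            rw [sup_assoc b c (c ⊔ d), ← sup_assoc c c d, sup_idem, ← sup_assoc]
          have dz : Dh f ((b ⊔ c) ⊓ (c ⊔ d)) + Dh f (b ⊔ c ⊔ d) =
              Dh f (b ⊔ c) + Dh f (c ⊔ d) := by
            have h := Dh_modular f hf (b ⊔ c) (c ⊔ d); rw [hjz] at h; omega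
          have hzc : c = (b ⊔ c) ⊓ (c ⊔ d) :=
            eq_of_le_Dh f hf (le_inf le_sup_right le_sup_left) (by omega)
          have hRb : R ≤ b := by
            rw [hyb]
            exact le_inf (hx1R ▸ inf_le_right) (hx2R ▸ inf_le_right)
          have hRc : R ≤ c := by
            rw [hzc]
            exact le_inf (hx1R ▸ inf_le_right) (hx3R ▸ inf_le_right)
          have hRu : R ≤ u := hbc_u ▸ le_inf hRb hRc
          have := Dh_mono f hf hRu
          omega
        · -- main case: u ⋖ A, build the seven atoms
          have hcA : u ⋖ A := covBy_of_Dh f hf huA (by omega)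
          have hx1 : A ⊓ (b ⊔ c) = u := by
            rcases dichot hcA (le_inf huA (hub.trans le_sup_left)) inf_le_left with h | h
            · exact h
            · exact absurd (inf_eq_left.1 h) hnbc
          have hx2 : A ⊓ (b ⊔ d) = u := by
            rcases dichot hcA (le_inf huA (hub.trans le_sup_left)) inf_le_left with h | h
            · exact h
            · exact absurd (inf_eq_left.1 h) hnbd
          have hx3 : A ⊓ (c ⊔ d) = u := by
            rcases dichot hcA (le_inf huA (huc.trans le_sup_left)) inf_le_left with h | h
            · exact h
            · exact absurd (inf_eq_left.1 h) hncd
          have hAb_u : A ⊓ b = u :=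
            le_antisymm (hx1 ▸ inf_le_inf_left A le_sup_left) (le_inf huA hub)
          have hAc_u : A ⊓ c = u :=
            le_antisymm (hx1 ▸ inf_le_inf_left A le_sup_right) (le_inf huA huc)
          have hAd_u : A ⊓ d = u :=
            le_antisymm (hx2 ▸ inf_le_inf_left A le_sup_right) (le_inf huA hud)
          have dAb : Dh f (A ⊔ b) + Dh f u = Dh f A + Dh f b := by
            have h := Dh_modular f hf A b; rw [hAb_u] at h; omega
          have dAc : Dh f (A ⊔ c) + Dh f u = Dh f A + Dh f c := by
            have h := Dh_modular f hf A c; rw [hAc_u] at h; omega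
          have dAd : Dh f (A ⊔ d) + Dh f u = Dh f A + Dh f d := by
            have h := Dh_modular f hf A d; rw [hAd_u] at h; omega
          -- non-containments among the four atoms
          have nb_cd : ¬ b ≤ c ⊔ d := by
            intro h
            have h3 := dV
            rw [sup_assoc, sup_eq_right.2 h] at h3
            omega
          have nc_bd : ¬ c ≤ b ⊔ d := by
            intro h
            have h3 := dV
            rw [sup_right_comm, sup_eq_left.2 h] at h3
            omega
          have nd_bc : ¬ d ≤ b ⊔ c := by
            intro h
            have h3 := dV
            rw [sup_eq_left.2 h] at h3
            omega
          have nb_ac : ¬ b ≤ A ⊔ c := by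
            intro h
            have h2 : b ⊔ c = A ⊔ c :=
              eq_of_le_Dh f hf (sup_le h le_sup_right) (by omega)
            exact hnbc (by rw [h2]; exact le_sup_left)
          have nb_ad : ¬ b ≤ A ⊔ d := by
            intro h
            have h2 : b ⊔ d = A ⊔ d :=
              eq_of_le_Dh f hf (sup_le h le_sup_right) (by omega)
            exact hnbd (by rw [h2]; exact le_sup_left)
          have nc_ab : ¬ c ≤ A ⊔ b := by
            intro h
            have h2 : b ⊔ c = A ⊔ b :=
              eq_of_le_Dh f hf (sup_le le_sup_right h) (by omega)
            exact hnbc (by rw [h2]; exact le_sup_left)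
          have nc_ad : ¬ c ≤ A ⊔ d := by
            intro h
            have h2 : c ⊔ d = A ⊔ d :=
              eq_of_le_Dh f hf (sup_le h le_sup_right) (by omega)
            exact hncd (by rw [h2]; exact le_sup_left)
          have nd_ab : ¬ d ≤ A ⊔ b := by
            intro h
            have h2 : b ⊔ d = A ⊔ b :=
              eq_of_le_Dh f hf (sup_le le_sup_right h) (by omega)
            exact hnbd (by rw [h2]; exact le_sup_left)
          have nd_ac : ¬ d ≤ A ⊔ c := by
            intro h
            have h2 : c ⊔ d = A ⊔ c :=
              eq_of_le_Dh f hf (sup_le le_sup_right h) (by omega)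
            exact hncd (by rw [h2]; exact le_sup_left)
          -- the three extra atoms
          have hj5 : (A ⊔ b) ⊔ (c ⊔ d) = b ⊔ c ⊔ d := by
            apply le_antisymm
            · exact sup_le (sup_le hAbcd hbV) (sup_le hcV hdV)
            · exact sup_le (sup_le (le_sup_right.trans le_sup_left)
                (le_sup_left.trans le_sup_right)) (le_sup_right.trans le_sup_right)
          have d5 : Dh f ((A ⊔ b) ⊓ (c ⊔ d)) + Dh f (b ⊔ c ⊔ d) =
              Dh f (A ⊔ b) + Dh f (c ⊔ d) := by
            have h := Dh_modular f hf (A ⊔ b) (c ⊔ d); rw [hj5] at h; omega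
          have hup5 : u ≤ (A ⊔ b) ⊓ (c ⊔ d) :=
            le_inf (huA.trans le_sup_left) (huc.trans le_sup_left)
          have hc5 : u ⋖ (A ⊔ b) ⊓ (c ⊔ d) := covBy_of_Dh f hf hup5 (by omega)
          have hj6 : (A ⊔ c) ⊔ (b ⊔ d) = b ⊔ c ⊔ d := by
            apply le_antisymm
            · exact sup_le (sup_le hAbcd hcV) (sup_le hbV hdV)
            · exact sup_le (sup_le (le_sup_left.trans le_sup_right)
                (le_sup_right.trans le_sup_left)) (le_sup_right.trans le_sup_right)
          have d6 : Dh f ((A ⊔ c) ⊓ (b ⊔ d)) + Dh f (b ⊔ c ⊔ d) =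
              Dh f (A ⊔ c) + Dh f (b ⊔ d) := by
            have h := Dh_modular f hf (A ⊔ c) (b ⊔ d); rw [hj6] at h; omega
          have hup6 : u ≤ (A ⊔ c) ⊓ (b ⊔ d) :=
            le_inf (huA.trans le_sup_left) (hub.trans le_sup_left)
          have hc6 : u ⋖ (A ⊔ c) ⊓ (b ⊔ d) := covBy_of_Dh f hf hup6 (by omega)
          have hj7 : (A ⊔ d) ⊔ (b ⊔ c) = b ⊔ c ⊔ d := by
            apply le_antisymm
            · exact sup_le (sup_le hAbcd hdV) (sup_le hbV hcV)
            · exact sup_le (sup_le (le_sup_left.trans le_sup_right)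
                (le_sup_right.trans le_sup_right)) (le_sup_right.trans le_sup_left)
          have d7 : Dh f ((A ⊔ d) ⊓ (b ⊔ c)) + Dh f (b ⊔ c ⊔ d) =
              Dh f (A ⊔ d) + Dh f (b ⊔ c) := by
            have h := Dh_modular f hf (A ⊔ d) (b ⊔ c); rw [hj7] at h; omega
          have hup7 : u ≤ (A ⊔ d) ⊓ (b ⊔ c) :=
            le_inf (huA.trans le_sup_left) (hub.trans le_sup_left)
          have hc7 : u ⋖ (A ⊔ d) ⊓ (b ⊔ c) := covBy_of_Dh f hf hup7 (by omega)
          -- diagonal meets equal A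
          have hm56 : (A ⊔ b) ⊓ (A ⊔ c) = A := by
            have hj : (A ⊔ b) ⊔ (A ⊔ c) = b ⊔ c ⊔ d := by
              rw [sup_sup_sup_comm, sup_idem]; exact hjAbc
            have h := Dh_modular f hf (A ⊔ b) (A ⊔ c); rw [hj] at h
            exact (eq_of_le_Dh f hf (le_inf le_sup_left le_sup_left) (by omega)).symm
          have hm57 : (A ⊔ b) ⊓ (A ⊔ d) = A := by
            have hj : (A ⊔ b) ⊔ (A ⊔ d) = b ⊔ c ⊔ d := by
              rw [sup_sup_sup_comm, sup_idem]; exact hjAbd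
            have h := Dh_modular f hf (A ⊔ b) (A ⊔ d); rw [hj] at h
            exact (eq_of_le_Dh f hf (le_inf le_sup_left le_sup_left) (by omega)).symm
          have hm67 : (A ⊔ c) ⊓ (A ⊔ d) = A := by
            have hj : (A ⊔ c) ⊔ (A ⊔ d) = b ⊔ c ⊔ d := by
              rw [sup_sup_sup_comm, sup_idem]; exact hjAcd
            have h := Dh_modular f hf (A ⊔ c) (A ⊔ d); rw [hj] at h
            exact (eq_of_le_Dh f hf (le_inf le_sup_left le_sup_left) (by omega)).symm
          -- distinctness
          have nAb : A ≠ b := by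
            intro h; rw [h, inf_idem] at hAb_u
            rw [hAb_u] at db; omega
          have nAc : A ≠ c := by
            intro h; rw [h, inf_idem] at hAc_u
            rw [hAc_u] at dc; omega
          have nAd : A ≠ d := by
            intro h; rw [h, inf_idem] at hAd_u
            rw [hAd_u] at dd; omega
          have nbc : b ≠ c := by
            intro h; rw [h, inf_idem] at hbc_u
            rw [hbc_u] at dc; omega
          have nbd : b ≠ d := by
            intro h; rw [h, inf_idem] at hbd_u
            rw [hbd_u] at dd; omega
          have ncd : c ≠ d := by
            intro h; rw [h, inf_idem] at hcd_u
            rw [hcd_u] at dd; omega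
          have n5A : (A ⊔ b) ⊓ (c ⊔ d) ≠ A := fun h =>
            hncd (by rw [← h]; exact inf_le_right)
          have n5b : (A ⊔ b) ⊓ (c ⊔ d) ≠ b := fun h =>
            nb_cd (by rw [← h]; exact inf_le_right)
          have n5c : (A ⊔ b) ⊓ (c ⊔ d) ≠ c := fun h =>
            nc_ab (by rw [← h]; exact inf_le_left)
          have n5d : (A ⊔ b) ⊓ (c ⊔ d) ≠ d := fun h =>
            nd_ab (by rw [← h]; exact inf_le_left)
          have n6A : (A ⊔ c) ⊓ (b ⊔ d) ≠ A := fun h =>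
            hnbd (by rw [← h]; exact inf_le_right)
          have n6b : (A ⊔ c) ⊓ (b ⊔ d) ≠ b := fun h =>
            nb_ac (by rw [← h]; exact inf_le_left)
          have n6c : (A ⊔ c) ⊓ (b ⊔ d) ≠ c := fun h =>
            nc_bd (by rw [← h]; exact inf_le_right)
          have n6d : (A ⊔ c) ⊓ (b ⊔ d) ≠ d := fun h =>
            nd_ac (by rw [← h]; exact inf_le_left)
          have n7A : (A ⊔ d) ⊓ (b ⊔ c) ≠ A := fun h =>
            hnbc (by rw [← h]; exact inf_le_right)
          have n7b : (A ⊔ d) ⊓ (b ⊔ c) ≠ b := fun h =>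
            nb_ad (by rw [← h]; exact inf_le_left)
          have n7c : (A ⊔ d) ⊓ (b ⊔ c) ≠ c := fun h =>
            nc_ad (by rw [← h]; exact inf_le_left)
          have n7d : (A ⊔ d) ⊓ (b ⊔ c) ≠ d := fun h =>
            nd_bc (by rw [← h]; exact inf_le_right)
          have n56 : (A ⊔ b) ⊓ (c ⊔ d) ≠ (A ⊔ c) ⊓ (b ⊔ d) := by
            intro h
            have h2 : (A ⊔ b) ⊓ (c ⊔ d) ≤ (A ⊔ b) ⊓ (A ⊔ c) :=
              le_inf inf_le_left (by rw [h]; exact inf_le_left)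
            rw [hm56] at h2
            exact n5A (eq_of_le_Dh f hf h2 (by omega))
          have n57 : (A ⊔ b) ⊓ (c ⊔ d) ≠ (A ⊔ d) ⊓ (b ⊔ c) := by
            intro h
            have h2 : (A ⊔ b) ⊓ (c ⊔ d) ≤ (A ⊔ b) ⊓ (A ⊔ d) :=
              le_inf inf_le_left (by rw [h]; exact inf_le_left)
            rw [hm57] at h2
            exact n5A (eq_of_le_Dh f hf h2 (by omega))
          have n67 : (A ⊔ c) ⊓ (b ⊔ d) ≠ (A ⊔ d) ⊓ (b ⊔ c) := by
            intro h
            have h2 : (A ⊔ c) ⊓ (b ⊔ d) ≤ (A ⊔ c) ⊓ (A ⊔ d) :=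
              le_inf inf_le_left (by rw [h]; exact inf_le_left)
            rw [hm67] at h2
            exact n6A (eq_of_le_Dh f hf h2 (by omega))
          -- finish by counting
          exact count7 f hf u (b ⊔ c ⊔ d) (hub.trans hbV) (by omega)
            A b c d ((A ⊔ b) ⊓ (c ⊔ d)) ((A ⊔ c) ⊓ (b ⊔ d)) ((A ⊔ d) ⊓ (b ⊔ c))
            hcA hcb hcc hcd hc5 hc6 hc7
            hAbcd hbV hcV hdV
            (inf_le_right.trans (sup_le hcV hdV))
            (inf_le_right.trans (sup_le hbV hdV))
            (inf_le_right.trans (sup_le hbV hcV))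
            nAb nAc nAd (fun h => n5A h.symm) (fun h => n6A h.symm) (fun h => n7A h.symm)
            nbc nbd (fun h => n5b h.symm) (fun h => n6b h.symm) (fun h => n7b h.symm)
            ncd (fun h => n5c h.symm) (fun h => n6c h.symm) (fun h => n7c h.symm)
            (fun h => n5d h.symm) (fun h => n6d h.symm) (fun h => n7d h.symm)
            n56 n57 n67
    intro u v a b c d huv hgap hua hav hub hbv huc hcv hud hdv
    exact INNER (3 * n) u v a b c d (by omega) huv hgap hua hav hub hbv huc hcv hud hdv

lemma twoDistrib_of_tight : TwoDistrib L := by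
  intro a b c d
  apply le_antisymm
  · exact key f hf (Dh f (⊥ : L)) ⊥ ⊤ a b c d bot_le
      (by have := Dh_mono f hf (bot_le : (⊥ : L) ≤ ⊤); omega)
      bot_le le_top bot_le le_top bot_le le_top bot_le le_top
  · refine sup_le (sup_le ?_ ?_) ?_
    · exact inf_le_inf_left a le_sup_left
    · exact inf_le_inf_left a (sup_le (le_sup_left.trans le_sup_left) le_sup_right)
    · exact inf_le_inf_left a (sup_le (le_sup_right.trans le_sup_left) le_sup_right)

lemma noM4_of_tight : ¬ HasCoverPreservingM4 L := by
  rintro ⟨b, t, a, hinj, h1, h2, -, -⟩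
  have h := countL f hf b t 2 4 ((h1 0).le.trans (h2 0).le)
    (by have e1 := Dh_covBy f hf (h1 0); have e2 := Dh_covBy f hf (h2 0); omega)
    a h1 (fun i => (h2 i).le) (fun i j hij hc => hij (hinj hc))
  omega


end LatticeSide

end ThinAux

theorem statement_1 {L : Type} [Lattice L] [BoundedOrder L] [Fintype L] [IsModularLattice L]
    (n : ℕ) (f : L → Setoid (Fin n)) (hf : IsTightEmbedding f) :
    TwoDistrib L ∧ ¬ HasCoverPreservingM4 L :=
  ⟨ThinAux.twoDistrib_of_tight f hf, ThinAux.noM4_of_tight f hf⟩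

end
end
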